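/- arXiv:0911.4106 — 6 statements merged into one kernel-verified Lean document; each statement's English description precedes it below -/
import Mathlib

section
/- Let Λ be a lattice of full rank in ℝ² with successive minima λ₁ ≤ λ₂, and let x₁, x₂ ∈ Λ be vectors corresponding to the successive minima. Then x₁, x₂ form a ℤ-basis for Λ, i.e., every vector of Λ is an integer linear combination of x₁ and x₂. -/
noncomputable section

open InnerProductGeometry Real
open scoped Classical

/-- The Euclidean plane `ℝ²`. -/
abbrev E2 := EuclideanSpace ℝ (Fin 2)

/-- `x₁, x₂` form a ℤ-basis of the lattice `Λ ⊆ ℝ²`: they are linearly independent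
over ℝ and `Λ` is exactly the set of their integer linear combinations. -/
def IsZBasis (Λ : Set E2) (x₁ x₂ : E2) : Prop :=
  LinearIndependent ℝ ![x₁, x₂] ∧ Λ = {v : E2 | ∃ a b : ℤ, v = a • x₁ + b • x₂}

/-- `Λ` is a lattice of full rank in `ℝ²`, i.e. `Λ = XZ²` for an invertible matrix `X`. -/
def IsLattice (Λ : Set E2) : Prop := ∃ x₁ x₂ : E2, IsZBasis Λ x₁ x₂

/-- The `i`-th successive minimum of `Λ`:
`λᵢ = inf {λ > 0 : Λ ∩ λB contains i linearly independent nonzero vectors}`. -/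
noncomputable def succMin (Λ : Set E2) (i : ℕ) : ℝ :=
  sInf {r : ℝ | 0 < r ∧ ∃ v : Fin i → E2,
    (∀ j, v j ∈ Λ ∧ ‖v j‖ ≤ r) ∧ LinearIndependent ℝ v}

/-- `|det X|` for the basis matrix with columns `x₁, x₂`. -/
def detB (x₁ x₂ : E2) : ℝ := |x₁ 0 * x₂ 1 - x₁ 1 * x₂ 0|

/-- The determinant of a lattice: `|det X|` for a basis matrix `X` of `Λ`
(independent of the choice of basis). -/
noncomputable def latDet (Λ : Set E2) : ℝ :=
  if h : IsLattice Λ then detB h.choose h.choose_spec.choose else 0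

/-- The lattice packing density `Δ(Λ) = π λ₁² / (4 det Λ)`. -/
noncomputable def density (Λ : Set E2) : ℝ :=
  π * (succMin Λ 1) ^ 2 / (4 * latDet Λ)

/-- `x₁, x₂` are vectors of `Λ` corresponding to the successive minima, chosen so that
the angle between them lies in `[0, π/2]`. -/
def IsMinPair (Λ : Set E2) (x₁ x₂ : E2) : Prop :=
  x₁ ∈ Λ ∧ x₂ ∈ Λ ∧ LinearIndependent ℝ ![x₁, x₂] ∧
    ‖x₁‖ = succMin Λ 1 ∧ ‖x₂‖ = succMin Λ 2 ∧ angle x₁ x₂ ≤ π / 2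

/-- The angle `θ(Λ)` of a lattice: the angle between a pair of vectors corresponding to the
successive minima chosen with angle in `[0, π/2]` (for a well-rounded lattice this does not
depend on the choice of such a pair). -/
noncomputable def latAngle (Λ : Set E2) : ℝ :=
  if h : ∃ p : E2 × E2, IsMinPair Λ p.1 p.2 then angle h.choose.1 h.choose.2 else 0

/-- `Λ` and `Ω` are similar lattices: `Ω = α U Λ` for a nonzero real `α` and an
orthogonal `2×2` matrix `U`. -/
def LatSimilar (Λ Ω : Set E2) : Prop :=
  ∃ (α : ℝ) (U : Matrix (Fin 2) (Fin 2) ℝ), α ≠ 0 ∧ U.transpose * U = 1 ∧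
    Ω = (fun v => α • Matrix.toEuclideanLin U v) '' Λ

/-- The hexagonal lattice, spanned over ℤ by `(1, 0)` and `(1/2, √3/2)`. -/
def hexLattice : Set E2 :=
  {v : E2 | ∃ a b : ℤ, v = a • ((WithLp.equiv 2 (Fin 2 → ℝ)).symm ![1, 0]) +
    b • ((WithLp.equiv 2 (Fin 2 → ℝ)).symm ![1 / 2, Real.sqrt 3 / 2])}

-- lattice closed under ℤ-combinations
lemma lat_combo {Λ : Set E2} (hΛ : IsLattice Λ) {x y : E2} (hx : x ∈ Λ) (hy : y ∈ Λ)
    (p q : ℤ) : p • x + q • y ∈ Λ := by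
  obtain ⟨b₁, b₂, -, hset⟩ := hΛ
  rw [hset] at hx hy ⊢
  obtain ⟨a, b, rfl⟩ := hx
  obtain ⟨c, d, rfl⟩ := hy
  refine ⟨p * a + q * c, p * b + q * d, ?_⟩
  simp only [← Int.cast_smul_eq_zsmul ℝ]
  push_cast
  module

lemma succMin_bdd (Λ : Set E2) (i : ℕ) :
    BddBelow {r : ℝ | 0 < r ∧ ∃ v : Fin i → E2,
      (∀ j, v j ∈ Λ ∧ ‖v j‖ ≤ r) ∧ LinearIndependent ℝ v} :=
  ⟨0, fun _ hr => hr.1.le⟩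

lemma minA {Λ : Set E2} {v : E2} (hv : v ∈ Λ) (h0 : v ≠ 0) : succMin Λ 1 ≤ ‖v‖ := by
  refine csInf_le (succMin_bdd Λ 1) ⟨norm_pos_iff.2 h0, fun _ => v, fun j => ⟨hv, le_rfl⟩, ?_⟩
  exact linearIndependent_unique_iff.2 h0

lemma minB {Λ : Set E2} {x v : E2} (hx : x ∈ Λ) (hv : v ∈ Λ)
    (hli : LinearIndependent ℝ ![x, v]) : succMin Λ 2 ≤ max ‖x‖ ‖v‖ := by
  have hx0 : x ≠ 0 := by
    have := hli.ne_zero 0; simpa using this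
  refine csInf_le (succMin_bdd Λ 2) ⟨lt_max_of_lt_left (norm_pos_iff.2 hx0), ![x, v], ?_, hli⟩
  intro j
  fin_cases j
  · exact ⟨hx, le_max_left _ _⟩
  · exact ⟨hv, le_max_right _ _⟩

lemma minPos {Λ : Set E2} (hΛ : IsLattice Λ) : 0 < succMin Λ 1 := by
  obtain ⟨b₁, b₂, hbli, hset⟩ := hΛ
  have hcard : Fintype.card (Fin 2) = Module.finrank ℝ E2 := by
    simp [finrank_euclideanSpace_fin]
  let B : Module.Basis (Fin 2) ℝ E2 := basisOfLinearIndependentOfCardEqFinrank hbli hcard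
  have hB : ∀ i, B i = ![b₁, b₂] i := fun i => by
    rw [coe_basisOfLinearIndependentOfCardEqFinrank hbli hcard]
  let L : E2 →L[ℝ] (Fin 2 → ℝ) := LinearMap.toContinuousLinearMap (B.equivFun : E2 →ₗ[ℝ] _)
  -- lower bound on norms of nonzero lattice vectors
  have key : ∀ w ∈ Λ, w ≠ 0 → (1 : ℝ) ≤ ‖L‖ * ‖w‖ := by
    intro w hw hw0
    rw [hset] at hw
    obtain ⟨a, b, rfl⟩ := hw
    have hrep : B.equivFun (a • b₁ + b • b₂) = fun i => ![(a:ℝ), (b:ℝ)] i := by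
      have h1 : (a:ℤ) • b₁ + (b:ℤ) • b₂ = (a:ℝ) • B 0 + (b:ℝ) • B 1 := by
        rw [hB 0, hB 1]
        simp [Int.cast_smul_eq_zsmul]
      rw [h1]
      ext i
      simp only [map_add, map_smul]
      fin_cases i <;>
        simp [Module.Basis.equivFun_apply, Module.Basis.repr_self, Finsupp.single_apply]
    have hab : ¬((a:ℝ) = 0 ∧ (b:ℝ) = 0) := by
      rintro ⟨ha, hb⟩
      rw [Int.cast_eq_zero] at ha hb
      subst ha; subst hb
      simp at hw0
    have h1 : (1:ℝ) ≤ ‖L (a • b₁ + b • b₂)‖ := by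
      have : ∃ i, (1:ℝ) ≤ |(![(a:ℝ), (b:ℝ)]) i| := by
        by_cases ha : (a:ℝ) = 0
        · refine ⟨1, ?_⟩
          have hb : b ≠ 0 := by
            intro hb; exact hab ⟨ha, by simp [hb]⟩
          have : (1:ℤ) ≤ |b| := Int.one_le_abs hb
          simpa using (by exact_mod_cast this : (1:ℝ) ≤ |(b:ℝ)|)
        · refine ⟨0, ?_⟩
          have ha' : a ≠ 0 := fun h => ha (by simp [h])
          have : (1:ℤ) ≤ |a| := Int.one_le_abs ha'
          simpa using (by exact_mod_cast this : (1:ℝ) ≤ |(a:ℝ)|)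
      obtain ⟨i, hi⟩ := this
      calc (1:ℝ) ≤ |(![(a:ℝ), (b:ℝ)]) i| := hi
        _ = ‖(L (a • b₁ + b • b₂)) i‖ := by
            simp only [L, LinearMap.coe_toContinuousLinearMap']
            rw [show (B.equivFun : E2 →ₗ[ℝ] _) (a • b₁ + b • b₂)
              = B.equivFun (a • b₁ + b • b₂) from rfl, hrep]
            simp [Real.norm_eq_abs]
        _ ≤ ‖L (a • b₁ + b • b₂)‖ := norm_le_pi_norm _ i
    exact h1.trans (L.le_opNorm _)
  have hL0 : 0 < ‖L‖ := by
    have hb1 : b₁ ∈ Λ := by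
      rw [hset]; exact ⟨1, 0, by simp⟩
    have hb10 : b₁ ≠ 0 := by
      have := hbli.ne_zero 0; simpa using this
    by_contra h
    push_neg at h
    have := key b₁ hb1 hb10
    nlinarith [norm_nonneg (L), norm_nonneg b₁]
  have hlb : ∀ r ∈ {r : ℝ | 0 < r ∧ ∃ v : Fin 1 → E2,
      (∀ j, v j ∈ Λ ∧ ‖v j‖ ≤ r) ∧ LinearIndependent ℝ v}, 1 / ‖L‖ ≤ r := by
    rintro r ⟨hr, v, hv, hvli⟩
    have h0 : v 0 ≠ 0 := hvli.ne_zero 0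
    have := key (v 0) (hv 0).1 h0
    rw [div_le_iff₀ hL0, mul_comm]
    exact this.trans (by nlinarith [(hv 0).2, hL0])
  have hne : {r : ℝ | 0 < r ∧ ∃ v : Fin 1 → E2,
      (∀ j, v j ∈ Λ ∧ ‖v j‖ ≤ r) ∧ LinearIndependent ℝ v}.Nonempty := by
    have hb1 : b₁ ∈ Λ := by rw [hset]; exact ⟨1, 0, by simp⟩
    have hb10 : b₁ ≠ 0 := by have := hbli.ne_zero 0; simpa using this
    exact ⟨‖b₁‖, norm_pos_iff.2 hb10, fun _ => b₁, fun j => ⟨hb1, le_rfl⟩,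
      linearIndependent_unique_iff.2 hb10⟩
  have := le_csInf hne hlb
  calc (0:ℝ) < 1 / ‖L‖ := by positivity
    _ ≤ succMin Λ 1 := this

/-- Vectors `x₁, x₂` corresponding to the successive minima of a full-rank
lattice `Λ ⊆ ℝ²` form a ℤ-basis of `Λ`. -/
theorem stmt2 (Λ : Set E2) (hΛ : IsLattice Λ) (x₁ x₂ : E2)
    (hmem₁ : x₁ ∈ Λ) (hmem₂ : x₂ ∈ Λ) (hli : LinearIndependent ℝ ![x₁, x₂])
    (hn₁ : ‖x₁‖ = succMin Λ 1) (hn₂ : ‖x₂‖ = succMin Λ 2) :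
    IsZBasis Λ x₁ x₂ := by
  have hx1ne : x₁ ≠ 0 := by have := hli.ne_zero 0; simpa using this
  have hx2ne : x₂ ≠ 0 := by have := hli.ne_zero 1; simpa using this
  have hx1pos : 0 < ‖x₁‖ := hn₁ ▸ minPos hΛ
  -- every nonzero lattice vector is at least as long as x₁
  have h1le : ∀ v ∈ Λ, v ≠ 0 → ‖x₁‖ ≤ ‖v‖ := fun v hv h0 => hn₁ ▸ minA hv h0
  have h12 : ‖x₁‖ ≤ ‖x₂‖ := h1le x₂ hmem₂ hx2ne
  have hx2pos : 0 < ‖x₂‖ := lt_of_lt_of_le hx1pos h12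
  -- every lattice vector independent from x₁ is at least as long as x₂
  have h2le : ∀ v ∈ Λ, LinearIndependent ℝ ![x₁, v] → ‖x₂‖ ≤ ‖v‖ := by
    intro v hv hliv
    have hvne : v ≠ 0 := by have := hliv.ne_zero 1; simpa using this
    have hmax : ‖x₂‖ ≤ max ‖x₁‖ ‖v‖ := hn₂ ▸ minB hmem₁ hv hliv
    rcases max_cases ‖x₁‖ ‖v‖ with ⟨he, -⟩ | ⟨he, -⟩
    · exact (hmax.trans_eq he).trans (h1le v hv hvne)
    · exact hmax.trans_eq he
  refine ⟨hli, Set.Subset.antisymm ?_ ?_⟩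
  · -- Λ ⊆ integer combinations
    intro v hv
    -- write v = α x₁ + β x₂
    have hcard : Fintype.card (Fin 2) = Module.finrank ℝ E2 := by
      simp [finrank_euclideanSpace_fin]
    have hspan : Submodule.span ℝ (Set.range ![x₁, x₂]) = ⊤ :=
      hli.span_eq_top_of_card_eq_finrank hcard
    have hrange : Set.range ![x₁, x₂] = {x₁, x₂} := by
      simp [Matrix.range_cons, Matrix.range_empty, Set.pair_comm]
    rw [hrange] at hspan
    have hvmem : v ∈ Submodule.span ℝ ({x₁, x₂} : Set E2) := hspan ▸ Submodule.mem_top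
    obtain ⟨α, β, hαβ⟩ := Submodule.mem_span_pair.1 hvmem
    set m : ℤ := round α
    set n : ℤ := round β
    set w : E2 := v + ((-m) • x₁ + (-n) • x₂) with hw
    have hwΛ : w ∈ Λ := by
      have h1 : (-m) • x₁ + (-n) • x₂ ∈ Λ := lat_combo hΛ hmem₁ hmem₂ (-m) (-n)
      have h2 := lat_combo hΛ hv h1 1 1
      rw [hw]
      simpa [add_assoc] using h2
    have hwrep : w = (α - m) • x₁ + (β - n) • x₂ := by
      rw [hw, ← hαβ]
      simp only [← Int.cast_smul_eq_zsmul ℝ]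
      push_cast
      module
    have hmabs : |α - (m:ℝ)| ≤ 1/2 := abs_sub_round α
    have hnabs : |β - (n:ℝ)| ≤ 1/2 := abs_sub_round β
    -- show β - n = 0
    have hβ : β - (n:ℝ) = 0 := by
      by_contra hβ0
      have hliw : LinearIndependent ℝ ![x₁, w] := by
        rw [LinearIndependent.pair_iff] at hli ⊢
        intro s t hst
        rw [hwrep] at hst
        have h0 : (s + t * (α - m)) • x₁ + (t * (β - n)) • x₂ = 0 := by
          rw [← hst]; module
        obtain ⟨h1, h2⟩ := hli _ _ h0
        have ht : t = 0 := by
          rcases mul_eq_zero.1 h2 with h | h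
          · exact h
          · exact absurd h hβ0
        constructor
        · rw [ht] at h1; simpa using h1
        · exact ht
      have hge : ‖x₂‖ ≤ ‖w‖ := h2le w hwΛ hliw
      have hlt : ‖w‖ < ‖x₂‖ := by
        rcases eq_or_ne (α - (m:ℝ)) 0 with hα0 | hα0
        · rw [hwrep, hα0, zero_smul, zero_add, norm_smul, Real.norm_eq_abs]
          calc |β - (n:ℝ)| * ‖x₂‖ ≤ (1/2) * ‖x₂‖ := by
                exact mul_le_mul_of_nonneg_right hnabs (norm_nonneg _)
            _ < ‖x₂‖ := by linarith
        · have hnsr : ¬ SameRay ℝ ((α - m) • x₁) ((β - n) • x₂) := by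
            intro hsr
            have hne1 : (α - (m:ℝ)) • x₁ ≠ 0 := smul_ne_zero hα0 hx1ne
            have hne2 : (β - (n:ℝ)) • x₂ ≠ 0 := smul_ne_zero hβ0 hx2ne
            obtain ⟨r, hr, heq⟩ := hsr.exists_pos_left hne1 hne2
            -- r • ((α-m)•x₁) = (β-n)•x₂ contradicts independence
            have h0 : (r * (α - m)) • x₁ + (-(β - n)) • x₂ = 0 := by
              rw [mul_smul, heq]; module
            obtain ⟨-, h2⟩ := LinearIndependent.pair_iff.1 hli _ _ h0
            exact hβ0 (by linarith [neg_eq_zero.1 h2])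
          calc ‖w‖ = ‖(α - (m:ℝ)) • x₁ + (β - (n:ℝ)) • x₂‖ := by rw [hwrep]
            _ < ‖(α - (m:ℝ)) • x₁‖ + ‖(β - (n:ℝ)) • x₂‖ := norm_add_lt_of_not_sameRay hnsr
            _ = |α - (m:ℝ)| * ‖x₁‖ + |β - (n:ℝ)| * ‖x₂‖ := by
                rw [norm_smul, norm_smul, Real.norm_eq_abs, Real.norm_eq_abs]
            _ ≤ (1/2) * ‖x₂‖ + (1/2) * ‖x₂‖ := by
                have := abs_nonneg (α - (m:ℝ))
                have := abs_nonneg (β - (n:ℝ))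
                nlinarith
            _ = ‖x₂‖ := by ring
      exact absurd hge (not_le.2 hlt)
    -- show α - m = 0
    have hα : α - (m:ℝ) = 0 := by
      by_contra hα0
      have hwne : w ≠ 0 := by
        rw [hwrep, hβ, zero_smul, add_zero]
        exact smul_ne_zero hα0 hx1ne
      have hge : ‖x₁‖ ≤ ‖w‖ := h1le w hwΛ hwne
      have hlt : ‖w‖ < ‖x₁‖ := by
        rw [hwrep, hβ, zero_smul, add_zero, norm_smul, Real.norm_eq_abs]
        calc |α - (m:ℝ)| * ‖x₁‖ ≤ (1/2) * ‖x₁‖ :=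
              mul_le_mul_of_nonneg_right hmabs (norm_nonneg _)
          _ < ‖x₁‖ := by linarith
      exact absurd hge (not_le.2 hlt)
    refine ⟨m, n, ?_⟩
    have hαm : α = (m:ℝ) := by linarith [sub_eq_zero.1 hα]
    have hβn : β = (n:ℝ) := by linarith [sub_eq_zero.1 hβ]
    rw [← hαβ, hαm, hβn]
    simp only [← Int.cast_smul_eq_zsmul ℝ]
  · -- integer combinations ⊆ Λ
    rintro v ⟨a, b, rfl⟩
    exact lat_combo hΛ hmem₁ hmem₂ a b
end
end

section
/- Let Λ be a lattice of full rank in ℝ², and let x₁, x₂ be a ℤ-basis for Λ such that ‖x₁‖ = ‖x₂‖ and the angle θ between x₁ and x₂ lies in the interval [π/3, π/2]. Then every nonzero vector z ∈ Λ satisfies ‖z‖ ≥ ‖x₁‖; consequently x₁, x₂ correspond to the successive minima of Λ and Λ is well-rounded with λ₁ = λ₂ = ‖x₁‖. -/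
noncomputable section

open InnerProductGeometry Real
open scoped Classical

section Aux

lemma key_int (a b : ℤ) (h : ¬(a = 0 ∧ b = 0)) : 1 ≤ a ^ 2 + b ^ 2 - |a * b| := by
  rcases eq_or_ne a 0 with ha | ha
  · subst ha
    have hb : b ≠ 0 := by tauto
    have h0 : 0 < b ^ 2 := by positivity
    have := Int.add_one_le_of_lt h0
    simpa using this
  rcases eq_or_ne b 0 with hb | hb
  · subst hb
    have h0 : 0 < a ^ 2 := by positivity
    have := Int.add_one_le_of_lt h0
    simpa using this
  have h1 : 1 ≤ |a * b| := by
    have := abs_pos.mpr (mul_ne_zero ha hb)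
    linarith [Int.add_one_le_of_lt this]
  have h2 : 2 * |a * b| ≤ a ^ 2 + b ^ 2 := by
    nlinarith [sq_abs a, sq_abs b, sq_nonneg (|a| - |b|), abs_mul a b]
  linarith

lemma norm_lb (x₁ x₂ : E2) (hnorm : ‖x₁‖ = ‖x₂‖) (hx : x₁ ≠ 0)
    (hθ₁ : π / 3 ≤ angle x₁ x₂) (hθ₂ : angle x₁ x₂ ≤ π / 2)
    (a b : ℤ) (hab : ¬(a = 0 ∧ b = 0)) :
    ‖x₁‖ ≤ ‖(a : ℝ) • x₁ + (b : ℝ) • x₂‖ := by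
  have hn0 : 0 < ‖x₁‖ := norm_pos_iff.mpr hx
  have hcos := cos_angle x₁ x₂
  have hc0 : 0 ≤ Real.cos (angle x₁ x₂) := by
    have := Real.cos_le_cos_of_nonneg_of_le_pi (angle_nonneg x₁ x₂)
      (by linarith [Real.pi_pos]) hθ₂
    simpa using this
  have hc1 : Real.cos (angle x₁ x₂) ≤ 1/2 := by
    have := Real.cos_le_cos_of_nonneg_of_le_pi (by positivity) (angle_le_pi x₁ x₂) hθ₁
    simpa [Real.cos_pi_div_three] using this
  have hceq : (inner ℝ x₁ x₂ : ℝ) = Real.cos (angle x₁ x₂) * (‖x₁‖ * ‖x₁‖) := by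
    rw [hcos]
    rw [hnorm] at hn0 ⊢
    exact (div_mul_cancel₀ _ (by positivity)).symm
  have hclb : 0 ≤ (inner ℝ x₁ x₂ : ℝ) := by nlinarith
  have hcub : (inner ℝ x₁ x₂ : ℝ) ≤ ‖x₁‖ ^ 2 / 2 := by nlinarith
  have hsq : ‖(a : ℝ) • x₁ + (b : ℝ) • x₂‖ ^ 2
      = (a:ℝ)^2 * ‖x₁‖^2 + 2 * a * b * (inner ℝ x₁ x₂ : ℝ) + (b:ℝ)^2 * ‖x₁‖^2 := by
    rw [norm_add_sq_real]
    simp only [norm_smul, Real.norm_eq_abs, real_inner_smul_left, real_inner_smul_right,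
      mul_pow, sq_abs, ← hnorm]
    ring
  have hkey : (1 : ℝ) ≤ (a:ℝ)^2 + (b:ℝ)^2 - |(a:ℝ) * b| := by
    have h := key_int a b hab
    have h2 : ((1 : ℤ) : ℝ) ≤ ((a ^ 2 + b ^ 2 - |a * b| : ℤ) : ℝ) := by exact_mod_cast h
    push_cast at h2
    linarith
  have hge : ‖x₁‖ ^ 2 ≤ ‖(a : ℝ) • x₁ + (b : ℝ) • x₂‖ ^ 2 := by
    rcases le_or_gt 0 ((a:ℝ) * b) with hs | hs
    · have habs : |(a:ℝ) * b| = (a:ℝ) * b := abs_of_nonneg hs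
      nlinarith
    · have habs : |(a:ℝ) * b| = -((a:ℝ) * b) := abs_of_neg hs
      nlinarith
  nlinarith [norm_nonneg ((a : ℝ) • x₁ + (b : ℝ) • x₂)]

end Aux

/-- If `x₁, x₂` is a ℤ-basis of `Λ ⊆ ℝ²` with `‖x₁‖ = ‖x₂‖` and the angle
between them in `[π/3, π/2]`, then every nonzero `z ∈ Λ` has `‖z‖ ≥ ‖x₁‖`; consequently
`x₁, x₂` correspond to the successive minima and `Λ` is well-rounded with
`λ₁ = λ₂ = ‖x₁‖`. -/
theorem stmt3 (Λ : Set E2) (x₁ x₂ : E2) (hbasis : IsZBasis Λ x₁ x₂)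
    (hnorm : ‖x₁‖ = ‖x₂‖)
    (hθ₁ : π / 3 ≤ angle x₁ x₂) (hθ₂ : angle x₁ x₂ ≤ π / 2) :
    (∀ z ∈ Λ, z ≠ 0 → ‖x₁‖ ≤ ‖z‖) ∧
      succMin Λ 1 = ‖x₁‖ ∧ succMin Λ 2 = ‖x₁‖ := by
  obtain ⟨hli, hΛ⟩ := hbasis
  have hx1 : x₁ ≠ 0 := by
    have := hli.ne_zero 0
    simpa using this
  have hn0 : 0 < ‖x₁‖ := norm_pos_iff.mpr hx1
  have hmem1 : x₁ ∈ Λ := by rw [hΛ]; exact ⟨1, 0, by simp⟩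
  have hmem2 : x₂ ∈ Λ := by rw [hΛ]; exact ⟨0, 1, by simp⟩
  have hlb : ∀ z ∈ Λ, z ≠ 0 → ‖x₁‖ ≤ ‖z‖ := by
    intro z hz hz0
    rw [hΛ] at hz
    obtain ⟨a, b, rfl⟩ := hz
    have hab : ¬(a = 0 ∧ b = 0) := by
      rintro ⟨rfl, rfl⟩
      simp at hz0
    have h := norm_lb x₁ x₂ hnorm hx1 hθ₁ hθ₂ a b hab
    simpa [Int.cast_smul_eq_zsmul] using h
  refine ⟨hlb, ?_, ?_⟩
  · apply le_antisymm
    · apply csInf_le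
      · exact ⟨‖x₁‖, by
          rintro r ⟨hr, v, hv, hvli⟩
          have h0 := hv 0
          have hne : v 0 ≠ 0 := hvli.ne_zero 0
          exact le_trans (hlb _ h0.1 hne) h0.2⟩
      · exact ⟨hn0, fun _ => x₁, fun j => ⟨hmem1, le_refl _⟩,
          linearIndependent_unique_iff.mpr hx1⟩
    · apply le_csInf
      · exact ⟨‖x₁‖, hn0, fun _ => x₁, fun j => ⟨hmem1, le_refl _⟩,
          linearIndependent_unique_iff.mpr hx1⟩
      · rintro r ⟨hr, v, hv, hvli⟩
        have h0 := hv 0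
        have hne : v 0 ≠ 0 := hvli.ne_zero 0
        exact le_trans (hlb _ h0.1 hne) h0.2
  · apply le_antisymm
    · apply csInf_le
      · exact ⟨‖x₁‖, by
          rintro r ⟨hr, v, hv, hvli⟩
          have h0 := hv 0
          have hne : v 0 ≠ 0 := hvli.ne_zero 0
          exact le_trans (hlb _ h0.1 hne) h0.2⟩
      · refine ⟨hn0, ![x₁, x₂], ?_, hli⟩
        intro j
        fin_cases j
        · exact ⟨hmem1, by simp⟩
        · exact ⟨by simpa using hmem2, by simp [hnorm.symm]⟩
    · apply le_csInf
      · exact ⟨‖x₁‖, hn0, ![x₁, x₂], by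
          intro j
          fin_cases j
          · exact ⟨hmem1, by simp⟩
          · exact ⟨by simpa using hmem2, by simp [hnorm.symm]⟩, hli⟩
      · rintro r ⟨hr, v, hv, hvli⟩
        have h0 := hv 0
        have hne : v 0 ≠ 0 := hvli.ne_zero 0
        exact le_trans (hlb _ h0.1 hne) h0.2
end
end

section
/- Let Λ be a lattice of full rank in ℝ² with successive minima λ₁ ≤ λ₂ and corresponding minimal basis vectors x₁, x₂. Then the lattice Λ_WR spanned over ℤ by x₁ and (λ₁/λ₂)x₂ is well-rounded, and both of its successive minima are equal to λ₁. -/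
noncomputable section

open InnerProductGeometry Real
open scoped Classical

private lemma stmt5_int_aux (a b : ℤ) (h : ¬(a = 0 ∧ b = 0)) :
    (1:ℝ) ≤ (a:ℝ)^2 - |(a:ℝ)| * |(b:ℝ)| + (b:ℝ)^2 := by
  have key : (1:ℤ) ≤ a^2 - |a| * |b| + b^2 := by
    rcases eq_or_ne a 0 with rfl | ha
    · have hb : b ≠ 0 := fun hb => h ⟨rfl, hb⟩
      have : 1 ≤ |b| := Int.one_le_abs hb
      nlinarith [sq_abs b, abs_zero (α:=ℤ)]
    · rcases eq_or_ne b 0 with rfl | hb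
      · have : 1 ≤ |a| := Int.one_le_abs ha
        nlinarith [sq_abs a, abs_zero (α:=ℤ)]
      · have h1 : 1 ≤ |a| := Int.one_le_abs ha
        have h2 : 1 ≤ |b| := Int.one_le_abs hb
        nlinarith [sq_nonneg (|a| - |b|), sq_abs a, sq_abs b]
  exact_mod_cast key

set_option maxHeartbeats 1000000 in
/-- If `x₁, x₂` is a minimal basis of `Λ ⊆ ℝ²` corresponding to the successive
minima `λ₁ ≤ λ₂`, then the lattice `Λ_WR` spanned over ℤ by `x₁` and `(λ₁/λ₂) x₂` is
well-rounded with both successive minima equal to `λ₁`. -/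
theorem stmt5 (Λ : Set E2) (hΛ : IsLattice Λ) (x₁ x₂ : E2)
    (hmin : IsMinPair Λ x₁ x₂) (hbasis : IsZBasis Λ x₁ x₂)
    (ΛWR : Set E2)
    (hdef : ΛWR = {v : E2 | ∃ a b : ℤ,
      v = a • x₁ + b • ((succMin Λ 1 / succMin Λ 2) • x₂)}) :
    succMin ΛWR 1 = succMin ΛWR 2 ∧
      succMin ΛWR 1 = succMin Λ 1 ∧ succMin ΛWR 2 = succMin Λ 1 := by
  obtain ⟨hx1Λ, hx2Λ, hli, hn1, hn2, -⟩ := hmin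
  set l1 := succMin Λ 1 with hl1def
  set l2 := succMin Λ 2 with hl2def
  have hx1ne : x₁ ≠ 0 := by simpa using hli.ne_zero 0
  have hx2ne : x₂ ≠ 0 := by simpa using hli.ne_zero 1
  have hl1pos : 0 < l1 := hn1 ▸ norm_pos_iff.2 hx1ne
  -- every nonzero vector of Λ has norm ≥ l1
  have hlb : ∀ w ∈ Λ, w ≠ 0 → l1 ≤ ‖w‖ := by
    intro w hw hw0
    refine csInf_le ⟨0, fun x hx => hx.1.le⟩
      ⟨norm_pos_iff.2 hw0, ![w], fun j => ?_, (linearIndependent_unique_iff (v := ![w])).2 (by simpa using hw0)⟩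
    fin_cases j <;> simp [hw]
  have hl12 : l1 ≤ l2 := by
    have := hlb x₂ hx2Λ hx2ne; rwa [hn2] at this
  have hl2pos : 0 < l2 := lt_of_lt_of_le hl1pos hl12
  -- every vector of Λ independent of x₁ has norm ≥ l2
  have hlb2 : ∀ w ∈ Λ, LinearIndependent ℝ ![x₁, w] → l2 ≤ ‖w‖ := by
    intro w hw hliw
    have hw0 : w ≠ 0 := by simpa using hliw.ne_zero 1
    have h1w : l1 ≤ ‖w‖ := hlb w hw hw0
    have : l2 ≤ max ‖x₁‖ ‖w‖ := by
      refine csInf_le ⟨0, fun x hx => hx.1.le⟩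
        ⟨lt_of_lt_of_le (hn1 ▸ hl1pos) (le_max_left _ _), ![x₁, w], fun j => ?_, hliw⟩
      fin_cases j
      · exact ⟨hx1Λ, le_max_left _ _⟩
      · exact ⟨hw, le_max_right _ _⟩
    rwa [hn1, max_eq_right h1w] at this
  have hpair := LinearIndependent.pair_iff.1 hli
  -- inner product bound
  set c : ℝ := inner ℝ x₁ x₂ with hcdef
  have hmemΛ : ∀ (a b : ℤ), (a:ℝ) • x₁ + (b:ℝ) • x₂ ∈ Λ := by
    intro a b
    rw [hbasis.2]
    exact ⟨a, b, by rw [Int.cast_smul_eq_zsmul, Int.cast_smul_eq_zsmul]⟩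
  have hind : ∀ ε : ℝ, ε ≠ 0 → LinearIndependent ℝ ![x₁, ε • x₁ + x₂] := by
    intro ε hε
    refine LinearIndependent.pair_iff.2 fun s t hst => ?_
    have : (s + t * ε) • x₁ + t • x₂ = 0 := by
      rw [add_smul, mul_smul]
      rw [smul_add] at hst
      linear_combination (norm := module) hst
    obtain ⟨h1, h2⟩ := hpair _ _ this
    refine ⟨?_, h2⟩
    rw [h2, zero_mul, add_zero] at h1
    exact h1
  have hcbound : 2 * |c| ≤ l1 ^ 2 := by
    have hp : l2 ≤ ‖(1:ℝ) • x₁ + x₂‖ := hlb2 _ (by simpa using hmemΛ 1 1) (hind 1 one_ne_zero)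
    have hm : l2 ≤ ‖(-1:ℝ) • x₁ + x₂‖ := hlb2 _ (by simpa using hmemΛ (-1) 1) (hind (-1) (by norm_num))
    rw [one_smul] at hp
    have hmeq : (-1:ℝ) • x₁ + x₂ = x₂ - x₁ := by module
    rw [hmeq] at hm
    have hp2 : l2 ^ 2 ≤ ‖x₁ + x₂‖ ^ 2 :=
      pow_le_pow_left₀ hl2pos.le hp 2
    have hm2 : l2 ^ 2 ≤ ‖x₂ - x₁‖ ^ 2 :=
      pow_le_pow_left₀ hl2pos.le hm 2
    have ep : ‖x₁ + x₂‖ ^ 2 = ‖x₁‖ ^ 2 + 2 * c + ‖x₂‖ ^ 2 := by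
      rw [@norm_add_sq_real]
    have em : ‖x₂ - x₁‖ ^ 2 = ‖x₂‖ ^ 2 - 2 * c + ‖x₁‖ ^ 2 := by
      rw [@norm_sub_sq_real, real_inner_comm]
    rw [hn1, hn2] at ep em
    rcases abs_cases c with ⟨h, -⟩ | ⟨h, -⟩ <;> rw [h] <;> nlinarith
  -- parameters of the new lattice
  set t : ℝ := l1 / l2 with htdef
  have ht0 : 0 < t := div_pos hl1pos hl2pos
  have ht1 : t ≤ 1 := div_le_one_of_le₀ hl12 hl2pos.le
  have htl2 : t * l2 = l1 := div_mul_cancel₀ _ hl2pos.ne'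
  -- every nonzero vector of ΛWR has norm ≥ l1
  have hWRlb : ∀ w ∈ ΛWR, w ≠ 0 → l1 ≤ ‖w‖ := by
    intro w hw hw0
    rw [hdef] at hw
    obtain ⟨a, b, rfl⟩ := hw
    set ra : ℝ := (a:ℝ)
    set rb : ℝ := (b:ℝ)
    have hwe : a • x₁ + b • (t • x₂) = ra • x₁ + (rb * t) • x₂ := by
      rw [← Int.cast_smul_eq_zsmul ℝ a, ← Int.cast_smul_eq_zsmul ℝ b, smul_smul]
    rw [hwe] at hw0 ⊢
    have hab : ¬(a = 0 ∧ b = 0) := by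
      rintro ⟨rfl, rfl⟩
      simp [ra, rb] at hw0
    have hkey : (1:ℝ) ≤ ra ^ 2 - |ra| * |rb| + rb ^ 2 := stmt5_int_aux a b hab
    have hnorm2 : ‖ra • x₁ + (rb * t) • x₂‖ ^ 2
        = ra ^ 2 * l1 ^ 2 + 2 * (ra * (rb * t) * c) + (rb * t) ^ 2 * l2 ^ 2 := by
      rw [@norm_add_sq_real, norm_smul, norm_smul, real_inner_smul_left,
        real_inner_smul_right, hn1, hn2, mul_pow, mul_pow]
      simp only [Real.norm_eq_abs, sq_abs]
      ring
    have hcross : -( |ra| * |rb| * l1 ^ 2) ≤ 2 * (ra * (rb * t) * c) := by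
      have h1 : |2 * (ra * (rb * t) * c)| = 2 * (|ra| * (|rb| * t) * |c|) := by
        rw [abs_mul, abs_mul, abs_mul, abs_mul, abs_of_pos ht0]
        norm_num
      have h2 : 2 * (|ra| * (|rb| * t) * |c|) ≤ |ra| * |rb| * l1 ^ 2 := by
        have hra : 0 ≤ |ra| := abs_nonneg _
        have hrb : 0 ≤ |rb| := abs_nonneg _
        have hc : 0 ≤ |c| := abs_nonneg _
        nlinarith [mul_nonneg hra hrb, mul_nonneg (mul_nonneg hra hrb) hc]
      calc -( |ra| * |rb| * l1 ^ 2) ≤ -(2 * (|ra| * (|rb| * t) * |c|)) := by linarith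
        _ = -|2 * (ra * (rb * t) * c)| := by rw [h1]
        _ ≤ 2 * (ra * (rb * t) * c) := neg_abs_le _
    have hl1sq : l1 ^ 2 ≤ ‖ra • x₁ + (rb * t) • x₂‖ ^ 2 := by
      rw [hnorm2]
      have htsq : (rb * t) ^ 2 * l2 ^ 2 = rb ^ 2 * l1 ^ 2 := by
        have h5 : (rb * t) ^ 2 * l2 ^ 2 = rb ^ 2 * (t * l2) ^ 2 := by ring
        rw [h5, htl2]
      rw [htsq]
      nlinarith [sq_nonneg ra, sq_nonneg rb, sq_abs ra, sq_abs rb]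
    nlinarith [norm_nonneg (ra • x₁ + (rb * t) • x₂)]
  -- the two generators of ΛWR
  have hx1WR : x₁ ∈ ΛWR := by
    rw [hdef]; exact ⟨1, 0, by simp⟩
  have hyWR : t • x₂ ∈ ΛWR := by
    rw [hdef]; exact ⟨0, 1, by simp⟩
  have hynorm : ‖t • x₂‖ = l1 := by
    rw [norm_smul, Real.norm_eq_abs, abs_of_pos ht0, hn2, htl2]
  have hliWR : LinearIndependent ℝ ![x₁, t • x₂] := by
    refine LinearIndependent.pair_iff.2 fun s r hsr => ?_
    have : s • x₁ + (r * t) • x₂ = 0 := by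
      rw [mul_smul]; exact hsr
    obtain ⟨h1, h2⟩ := hpair _ _ this
    exact ⟨h1, by
      rcases mul_eq_zero.1 h2 with h | h
      · exact h
      · exact absurd h ht0.ne'⟩
  have hvs1 : ∀ j : Fin 1, ![x₁] j ∈ ΛWR ∧ ‖![x₁] j‖ ≤ l1 := by
    intro j; fin_cases j <;> simp [hx1WR, hn1]
  have hvs2 : ∀ j : Fin 2, ![x₁, t • x₂] j ∈ ΛWR ∧ ‖![x₁, t • x₂] j‖ ≤ l1 := by
    intro j
    fin_cases j
    · exact ⟨hx1WR, le_of_eq hn1⟩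
    · exact ⟨hyWR, le_of_eq hynorm⟩
  -- upper bounds
  have hub1 : succMin ΛWR 1 ≤ l1 :=
    csInf_le ⟨0, fun x hx => hx.1.le⟩
      ⟨hl1pos, ![x₁], hvs1, (linearIndependent_unique_iff (v := ![x₁])).2 (by simpa using hx1ne)⟩
  have hub2 : succMin ΛWR 2 ≤ l1 :=
    csInf_le ⟨0, fun x hx => hx.1.le⟩ ⟨hl1pos, ![x₁, t • x₂], hvs2, hliWR⟩
  -- lower bounds
  have hlow1 : l1 ≤ succMin ΛWR 1 := by
    refine le_csInf ⟨l1, hl1pos, ![x₁], hvs1,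
      (linearIndependent_unique_iff (v := ![x₁])).2 (by simpa using hx1ne)⟩ ?_
    rintro r ⟨hr0, v, hv, hliv⟩
    have h0 := hv 0
    have := hWRlb (v 0) h0.1 (hliv.ne_zero 0)
    linarith [h0.2]
  have hlow2 : l1 ≤ succMin ΛWR 2 := by
    refine le_csInf ⟨l1, hl1pos, ![x₁, t • x₂], hvs2, hliWR⟩ ?_
    rintro r ⟨hr0, v, hv, hliv⟩
    have h0 := hv 0
    have := hWRlb (v 0) h0.1 (hliv.ne_zero 0)
    linarith [h0.2]
  refine ⟨?_, le_antisymm hub1 hlow1, le_antisymm hub2 hlow2⟩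
  rw [le_antisymm hub1 hlow1, le_antisymm hub2 hlow2]
end
end

section
/- Let Λ be a lattice of full rank in ℝ². Then the packing density satisfies Δ(Λ) ≤ π/(2√3) = 0.906899..., i.e., Δ(Λ) ≤ Δ(Λ_h), where Λ_h is the hexagonal lattice. -/
noncomputable section

open InnerProductGeometry Real
open scoped Classical

namespace S11

def cr (x y : E2) : ℝ := x 0 * y 1 - x 1 * y 0

lemma inner2 (x y : E2) : (inner ℝ x y : ℝ) = x 0 * y 0 + x 1 * y 1 := by
  simp [PiLp.inner_apply, RCLike.inner_apply, Fin.sum_univ_two, mul_comm]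

lemma normsq (x : E2) : ‖x‖ ^ 2 = x 0 ^ 2 + x 1 ^ 2 := by
  rw [← real_inner_self_eq_norm_sq, inner2]; ring

lemma lagrange (x y : E2) : cr x y ^ 2 + (inner ℝ x y : ℝ) ^ 2 = ‖x‖^2 * ‖y‖^2 := by
  rw [inner2, normsq, normsq, cr]; ring

lemma zcomb (a b : ℤ) (x y : E2) :
    a • x + b • y = (a:ℝ) • x + (b:ℝ) • y := by
  rw [Int.cast_smul_eq_zsmul, Int.cast_smul_eq_zsmul]

lemma e2_ext (x : E2) (h0 : x 0 = 0) (h1 : x 1 = 0) : x = 0 := by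
  ext i; fin_cases i <;> simpa

lemma abs_apply_le (x : E2) (i : Fin 2) : |x i| ≤ ‖x‖ := by
  have h := normsq x
  fin_cases i
  · show |x 0| ≤ ‖x‖
    nlinarith [sq_nonneg (x 1), abs_nonneg (x 0), sq_abs (x 0), norm_nonneg x]
  · show |x 1| ≤ ‖x‖
    nlinarith [sq_nonneg (x 0), abs_nonneg (x 1), sq_abs (x 1), norm_nonneg x]

lemma eq_zero_of_cr (z u w : E2) (h1 : cr z u = 0) (h2 : cr z w = 0)
    (h : cr u w ≠ 0) : z = 0 := by
  apply e2_ext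
  · have key : z 0 * cr u w = u 0 * cr z w - w 0 * cr z u := by simp [cr]; ring
    rw [h1, h2] at key; simpa [h] using mul_eq_zero.mp (by linarith : z 0 * cr u w = 0)
  · have key : z 1 * cr u w = u 1 * cr z w - w 1 * cr z u := by simp [cr]; ring
    rw [h1, h2] at key; simpa [h] using mul_eq_zero.mp (by linarith : z 1 * cr u w = 0)

lemma indep_iff (x y : E2) : LinearIndependent ℝ ![x, y] ↔ cr x y ≠ 0 := by
  rw [linearIndependent_fin2]
  simp only [Matrix.cons_val_one, Matrix.head_cons, Matrix.cons_val_zero]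
  constructor
  · rintro ⟨hy, hax⟩ hcr
    rcases eq_or_ne (y 0) 0 with h0 | h0
    · rcases eq_or_ne (y 1) 0 with h1 | h1
      · exact hy (e2_ext y h0 h1)
      · have hx0 : x 0 = 0 := by
          have : x 0 * y 1 = x 1 * y 0 := by simpa [cr, sub_eq_zero] using hcr
          rw [h0, mul_zero] at this; exact (mul_eq_zero.mp this).resolve_right h1
        refine hax (x 1 / y 1) (sub_eq_zero.mp (e2_ext _ ?_ ?_))
        · simp [PiLp.sub_apply, PiLp.smul_apply, h0, hx0]
        · simp [PiLp.sub_apply, PiLp.smul_apply]; field_simp; ring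
    · have : x 0 * y 1 = x 1 * y 0 := by simpa [cr, sub_eq_zero] using hcr
      refine hax (x 0 / y 0) (sub_eq_zero.mp (e2_ext _ ?_ ?_))
      · simp [PiLp.sub_apply, PiLp.smul_apply]; field_simp; ring
      · simp [PiLp.sub_apply, PiLp.smul_apply]; field_simp; linarith
  · intro hcr
    constructor
    · intro hy; apply hcr; simp [cr, hy]
    · intro a ha
      apply hcr
      have h0 : x 0 = a * y 0 := by rw [← ha]; simp
      have h1 : x 1 = a * y 1 := by rw [← ha]; simp
      simp [cr, h0, h1]; ring

lemma rep (u w v : E2) (h : cr u w ≠ 0) : ∃ α β : ℝ, v = α • u + β • w := by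
  have h' : u 0 * w 1 - u 1 * w 0 ≠ 0 := h
  refine ⟨cr v w / cr u w, cr u v / cr u w,
    (sub_eq_zero.mp (eq_zero_of_cr _ u w ?_ ?_ h)).symm.trans rfl⟩
  · simp only [cr, PiLp.sub_apply, PiLp.add_apply, PiLp.smul_apply, smul_eq_mul]
    linear_combination (-(u 0 * v 1 - u 1 * v 0)) * mul_inv_cancel₀ h'
  · simp only [cr, PiLp.sub_apply, PiLp.add_apply, PiLp.smul_apply, smul_eq_mul]
    linear_combination (v 0 * w 1 - v 1 * w 0) * mul_inv_cancel₀ h'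

lemma mem_iff {Λ : Set E2} {x₁ x₂ : E2} (hB : IsZBasis Λ x₁ x₂) (v : E2) :
    v ∈ Λ ↔ ∃ a b : ℤ, v = (a:ℝ) • x₁ + (b:ℝ) • x₂ := by
  rw [hB.2]
  simp only [Set.mem_setOf_eq, zcomb]

lemma add_mem {Λ : Set E2} {x₁ x₂ : E2} (hB : IsZBasis Λ x₁ x₂) {v w : E2}
    (hv : v ∈ Λ) (hw : w ∈ Λ) : v + w ∈ Λ := by
  rw [mem_iff hB] at *
  obtain ⟨a, b, rfl⟩ := hv; obtain ⟨c, d, rfl⟩ := hw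
  exact ⟨a + c, b + d, by push_cast; module⟩

lemma zsmul_mem {Λ : Set E2} {x₁ x₂ : E2} (hB : IsZBasis Λ x₁ x₂) {v : E2}
    (n : ℤ) (hv : v ∈ Λ) : (n:ℝ) • v ∈ Λ := by
  rw [mem_iff hB] at *
  obtain ⟨a, b, rfl⟩ := hv
  exact ⟨n * a, n * b, by push_cast; module⟩

lemma sub_mem {Λ : Set E2} {x₁ x₂ : E2} (hB : IsZBasis Λ x₁ x₂) {v w : E2}
    (hv : v ∈ Λ) (hw : w ∈ Λ) : v - w ∈ Λ := by
  have := add_mem hB hv (zsmul_mem hB (-1) hw)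
  simpa [sub_eq_add_neg] using this

lemma finite_inter {Λ : Set E2} {x₁ x₂ : E2} (hB : IsZBasis Λ x₁ x₂) (R : ℝ) :
    {v | v ∈ Λ ∧ ‖v‖ ≤ R}.Finite := by
  have hc : cr x₁ x₂ ≠ 0 := (indep_iff _ _).1 hB.1
  set c := cr x₁ x₂ with hcdef
  set M : ℝ := 2 * R * (‖x₁‖ + ‖x₂‖ + 1) / |c| with hM
  set N : ℤ := ⌈M⌉ with hN
  apply Set.Finite.subset (Set.Finite.image
    (f := fun p : ℤ × ℤ => (p.1:ℝ) • x₁ + (p.2:ℝ) • x₂)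
    (((Set.finite_Icc (-N) N).prod (Set.finite_Icc (-N) N))))
  rintro v ⟨hv, hR⟩
  obtain ⟨a, b, rfl⟩ := (mem_iff hB v).mp hv
  have h0 : (0:ℝ) ≤ R := le_trans (norm_nonneg _) hR
  have ha' : cr ((a:ℝ) • x₁ + (b:ℝ) • x₂) x₂ = (a:ℝ) * c := by
    simp only [cr, hcdef, PiLp.add_apply, PiLp.smul_apply, smul_eq_mul]; ring
  have hb' : cr x₁ ((a:ℝ) • x₁ + (b:ℝ) • x₂) = (b:ℝ) * c := by
    simp only [cr, hcdef, PiLp.add_apply, PiLp.smul_apply, smul_eq_mul]; ring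
  have hbound : ∀ y z : E2, |cr y z| ≤ 2 * ‖y‖ * ‖z‖ := by
    intro y z
    have h1 := abs_apply_le y 0; have h2 := abs_apply_le y 1
    have h3 := abs_apply_le z 0; have h4 := abs_apply_le z 1
    have e : |cr y z| ≤ |y 0| * |z 1| + |y 1| * |z 0| := by
      rw [cr]
      refine le_trans (abs_sub _ _) ?_
      rw [abs_mul, abs_mul]
    refine le_trans e ?_
    nlinarith [abs_nonneg (y 0), abs_nonneg (y 1), abs_nonneg (z 0), abs_nonneg (z 1),
      norm_nonneg y, norm_nonneg z]
  have key : ∀ t : ℤ, |(t:ℝ)| * |c| ≤ 2 * R * (‖x₁‖ + ‖x₂‖ + 1) → t ∈ Set.Icc (-N) N := by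
    intro t ht
    have hcpos : 0 < |c| := abs_pos.mpr hc
    have h1 : |(t:ℝ)| ≤ M := by rw [hM, le_div_iff₀ hcpos]; exact ht
    have h2 : |(t:ℝ)| ≤ (N:ℝ) := le_trans h1 (Int.le_ceil M)
    rw [← Int.cast_abs] at h2
    have h3 : |t| ≤ N := by exact_mod_cast h2
    exact ⟨neg_le_of_abs_le h3, le_of_abs_le h3⟩
  refine ⟨(a, b), ⟨?_, ?_⟩, rfl⟩
  · apply key
    have := hbound ((a:ℝ) • x₁ + (b:ℝ) • x₂) x₂
    rw [ha', abs_mul] at this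
    have hx2 : ‖x₂‖ ≤ ‖x₁‖ + ‖x₂‖ + 1 := by nlinarith [norm_nonneg x₁]
    nlinarith [norm_nonneg x₂, norm_nonneg ((a:ℝ) • x₁ + (b:ℝ) • x₂), abs_nonneg (a:ℝ),
      norm_nonneg x₁]
  · apply key
    have := hbound x₁ ((a:ℝ) • x₁ + (b:ℝ) • x₂)
    rw [hb', abs_mul] at this
    nlinarith [norm_nonneg x₁, norm_nonneg ((a:ℝ) • x₁ + (b:ℝ) • x₂), abs_nonneg (b:ℝ),
      norm_nonneg x₂]

lemma exists_min {Λ : Set E2} {x₁ x₂ : E2} (hB : IsZBasis Λ x₁ x₂) (P : E2 → Prop)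
    (v₀ : E2) (h₀ : v₀ ∈ Λ ∧ P v₀) :
    ∃ u, u ∈ Λ ∧ P u ∧ ∀ v, v ∈ Λ → P v → ‖u‖ ≤ ‖v‖ := by
  set S := {v | (v ∈ Λ ∧ P v) ∧ ‖v‖ ≤ ‖v₀‖} with hS
  have hfin : S.Finite := by
    apply Set.Finite.subset (finite_inter hB ‖v₀‖)
    rintro v ⟨⟨h1, _⟩, h2⟩; exact ⟨h1, h2⟩
  have hne : S.Nonempty := ⟨v₀, ⟨h₀, le_refl _⟩⟩
  obtain ⟨u, huS, hmin⟩ := Set.exists_min_image S (fun v => ‖v‖) hfin hne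
  refine ⟨u, huS.1.1, huS.1.2, fun v hv hP => ?_⟩
  rcases le_or_gt ‖v‖ ‖v₀‖ with h | h
  · exact hmin v ⟨⟨hv, hP⟩, h⟩
  · exact le_trans huS.2 h.le

lemma succMin_one {Λ : Set E2} (u : E2) (hu : u ∈ Λ) (hu0 : u ≠ 0)
    (hmin : ∀ v ∈ Λ, v ≠ 0 → ‖u‖ ≤ ‖v‖) : succMin Λ 1 = ‖u‖ := by
  have hupos : (0:ℝ) < ‖u‖ := norm_pos_iff.mpr hu0
  apply le_antisymm
  · apply csInf_le
    · exact ⟨0, fun r hr => hr.1.le⟩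
    · refine ⟨hupos, fun _ => u, fun j => ⟨hu, le_refl _⟩, ?_⟩
      exact linearIndependent_unique_iff.mpr hu0
  · apply le_csInf
    · refine ⟨‖u‖, hupos, fun _ => u, fun j => ⟨hu, le_refl _⟩, ?_⟩
      exact linearIndependent_unique_iff.mpr hu0
    · rintro r ⟨hr, v, hv, hind⟩
      exact le_trans (hmin (v 0) (hv 0).1 (hind.ne_zero 0)) (hv 0).2

lemma detB_cr (x y : E2) : detB x y = |cr x y| := rfl

lemma cr_zcomb (a b c d : ℤ) (x y : E2) :
    cr ((a:ℝ) • x + (b:ℝ) • y) ((c:ℝ) • x + (d:ℝ) • y)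
      = ((a * d - b * c : ℤ) : ℝ) * cr x y := by
  push_cast
  simp only [cr, PiLp.add_apply, PiLp.smul_apply, smul_eq_mul]
  ring

lemma detB_invariant {Λ : Set E2} {x₁ x₂ y₁ y₂ : E2}
    (h1 : IsZBasis Λ x₁ x₂) (h2 : IsZBasis Λ y₁ y₂) :
    detB x₁ x₂ = detB y₁ y₂ := by
  have hcx : cr x₁ x₂ ≠ 0 := (indep_iff _ _).1 h1.1
  have hy₁ : y₁ ∈ Λ := (mem_iff h2 y₁).mpr ⟨1, 0, by push_cast; module⟩
  have hy₂ : y₂ ∈ Λ := (mem_iff h2 y₂).mpr ⟨0, 1, by push_cast; module⟩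
  have hx₁ : x₁ ∈ Λ := (mem_iff h1 x₁).mpr ⟨1, 0, by push_cast; module⟩
  have hx₂ : x₂ ∈ Λ := (mem_iff h1 x₂).mpr ⟨0, 1, by push_cast; module⟩
  obtain ⟨a, b, hab⟩ := (mem_iff h1 y₁).mp hy₁
  obtain ⟨c, d, hcd⟩ := (mem_iff h1 y₂).mp hy₂
  obtain ⟨a', b', hab'⟩ := (mem_iff h2 x₁).mp hx₁
  obtain ⟨c', d', hcd'⟩ := (mem_iff h2 x₂).mp hx₂
  have e1 : cr y₁ y₂ = ((a * d - b * c : ℤ) : ℝ) * cr x₁ x₂ := by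
    rw [hab, hcd]; exact cr_zcomb a b c d x₁ x₂
  have e2 : cr x₁ x₂ = ((a' * d' - b' * c' : ℤ) : ℝ) * cr y₁ y₂ := by
    rw [hab', hcd']; exact cr_zcomb a' b' c' d' y₁ y₂
  set m : ℤ := a * d - b * c
  set n : ℤ := a' * d' - b' * c'
  have e3 : cr x₁ x₂ = ((n * m : ℤ) : ℝ) * cr x₁ x₂ := by
    conv_lhs => rw [e2, e1]
    push_cast; ring
  have e4 : (((n * m : ℤ) : ℝ) - 1) * cr x₁ x₂ = 0 := by linear_combination -e3
  have hmn : ((n * m : ℤ) : ℝ) = 1 := by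
    rcases mul_eq_zero.mp e4 with h | h
    · linarith
    · exact absurd h hcx
  have hmn' : n * m = 1 := by exact_mod_cast hmn
  have hm : m = 1 ∨ m = -1 := Int.isUnit_iff.mp (IsUnit.of_mul_eq_one (a := m) n (by linarith [hmn']))
  rw [detB_cr, detB_cr, e1, abs_mul]
  rcases hm with h | h <;> simp [h]

lemma latDet_eq {Λ : Set E2} {x₁ x₂ : E2} (hB : IsZBasis Λ x₁ x₂) :
    latDet Λ = detB x₁ x₂ := by
  have h : IsLattice Λ := ⟨x₁, x₂, hB⟩
  rw [latDet, dif_pos h]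
  exact detB_invariant h.choose_spec.choose_spec hB

set_option maxHeartbeats 1000000 in
lemma density_le (Λ : Set E2) (hΛ : IsLattice Λ) :
    density Λ ≤ π / (2 * Real.sqrt 3) := by
  obtain ⟨x₁, x₂, hB⟩ := hΛ
  have hc12 : cr x₁ x₂ ≠ 0 := (indep_iff _ _).1 hB.1
  have hx₁Λ : x₁ ∈ Λ := (mem_iff hB x₁).mpr ⟨1, 0, by push_cast; module⟩
  have hx₂Λ : x₂ ∈ Λ := (mem_iff hB x₂).mpr ⟨0, 1, by push_cast; module⟩
  have hx₁0 : x₁ ≠ 0 := by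
    intro h; apply hc12; rw [h]; simp [cr]
  obtain ⟨u, huΛ, hu0, humin⟩ := exists_min hB (fun v => v ≠ 0) x₁ ⟨hx₁Λ, hx₁0⟩
  have hun : (0:ℝ) < ‖u‖ := norm_pos_iff.mpr hu0
  have hcru : cr u u = 0 := by simp [cr]; ring
  have hz : ∃ z, z ∈ Λ ∧ cr u z ≠ 0 := by
    by_contra h
    push_neg at h
    have h1 : cr u x₁ = 0 := h x₁ hx₁Λ
    have h2 : cr u x₂ = 0 := h x₂ hx₂Λ
    have hu00 : u 0 ≠ 0 ∨ u 1 ≠ 0 := by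
      by_contra h'
      push_neg at h'
      exact hu0 (e2_ext u h'.1 h'.2)
    apply hc12
    have k0 : u 0 * cr x₁ x₂ = x₁ 0 * cr u x₂ - x₂ 0 * cr u x₁ := by simp [cr]; ring
    have k1 : u 1 * cr x₁ x₂ = x₁ 1 * cr u x₂ - x₂ 1 * cr u x₁ := by simp [cr]; ring
    rw [h1, h2] at k0 k1
    simp only [mul_zero, sub_zero, zero_sub, neg_zero] at k0 k1
    rcases hu00 with h' | h'
    · exact (mul_eq_zero.mp k0).resolve_left h'
    · exact (mul_eq_zero.mp k1).resolve_left h'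
  obtain ⟨z, hzΛ, hz0⟩ := hz
  obtain ⟨w, hwΛ, hw, hwmin⟩ := exists_min hB (fun v => cr u v ≠ 0) z ⟨hzΛ, hz0⟩
  have hw0 : w ≠ 0 := by intro h; apply hw; rw [h]; simp [cr]
  have huw : ‖u‖ ≤ ‖w‖ := humin w hwΛ hw0
  have hinner : |(inner ℝ u w : ℝ)| ≤ ‖u‖^2 / 2 := by
    have hm : w - u ∈ Λ := sub_mem hB hwΛ huΛ
    have hp : w + u ∈ Λ := add_mem hB hwΛ huΛ
    have hcm : cr u (w - u) ≠ 0 := by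
      have e : cr u (w - u) = cr u w - cr u u := by
        simp only [cr, PiLp.sub_apply]; ring
      rw [e, hcru, sub_zero]; exact hw
    have hcp : cr u (w + u) ≠ 0 := by
      have e : cr u (w + u) = cr u w + cr u u := by
        simp only [cr, PiLp.add_apply]; ring
      rw [e, hcru, add_zero]; exact hw
    have h1 : ‖w‖ ≤ ‖w - u‖ := hwmin _ hm hcm
    have h2 : ‖w‖ ≤ ‖w + u‖ := hwmin _ hp hcp
    have q1 : ‖w‖^2 ≤ ‖w - u‖^2 := pow_le_pow_left₀ (norm_nonneg w) h1 2
    have q2 : ‖w‖^2 ≤ ‖w + u‖^2 := pow_le_pow_left₀ (norm_nonneg w) h2 2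
    have e1 : ‖w - u‖^2 = ‖w‖^2 - 2 * (inner ℝ w u : ℝ) + ‖u‖^2 := norm_sub_sq_real w u
    have e2 : ‖w + u‖^2 = ‖w‖^2 + 2 * (inner ℝ w u : ℝ) + ‖u‖^2 := norm_add_sq_real w u
    have hs : (inner ℝ u w : ℝ) = (inner ℝ w u : ℝ) := real_inner_comm w u
    rw [abs_le]
    constructor <;> linarith
  have hcw : cr u w ≠ 0 := hw
  have hBuw : IsZBasis Λ u w := by
    refine ⟨(indep_iff u w).2 hcw, ?_⟩
    ext v
    simp only [Set.mem_setOf_eq]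
    constructor
    · intro hv
      obtain ⟨α, β, hαβ⟩ := rep u w v hcw
      set a := round α with hadef
      set b := round β with hbdef
      have hα' : |α - a| ≤ 1/2 := abs_sub_round α
      have hβ' : |β - b| ≤ 1/2 := abs_sub_round β
      have hmemab : (a:ℝ) • u + (b:ℝ) • w ∈ Λ :=
        add_mem hB (zsmul_mem hB a huΛ) (zsmul_mem hB b hwΛ)
      have hv' : v - ((a:ℝ) • u + (b:ℝ) • w) ∈ Λ := sub_mem hB hv hmemab
      set v' := v - ((a:ℝ) • u + (b:ℝ) • w) with hv'def
      have hrep' : v' = (α - a) • u + (β - b) • w := by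
        rw [hv'def, hαβ]; module
      have hβ0 : β - (b:ℝ) = 0 := by
        by_contra hβ0
        have hcrv' : cr u v' ≠ 0 := by
          have e : cr u v' = (β - b) * cr u w := by
            rw [hrep']
            simp only [cr, PiLp.add_apply, PiLp.smul_apply, smul_eq_mul]
            ring
          rw [e]; exact mul_ne_zero hβ0 hcw
        have hge : ‖w‖ ≤ ‖v'‖ := hwmin v' hv' hcrv'
        have e : ‖v'‖^2 = (α-a)^2*‖u‖^2 + 2*((α-a)*(β-b))*(inner ℝ u w : ℝ)
            + (β-b)^2*‖w‖^2 := by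
          rw [hrep', norm_add_sq_real, norm_smul, norm_smul,
            real_inner_smul_left, real_inner_smul_right]
          simp only [Real.norm_eq_abs, mul_pow, sq_abs]
          ring
        have hA2 : (α-a)^2 ≤ 1/4 := by nlinarith [sq_abs (α-(a:ℝ)), abs_nonneg (α-(a:ℝ))]
        have hB2 : (β-b)^2 ≤ 1/4 := by nlinarith [sq_abs (β-(b:ℝ)), abs_nonneg (β-(b:ℝ))]
        have hABs : 2*((α-a)*(β-b))*(inner ℝ u w : ℝ) ≤ ‖u‖^2/4 := by
          calc 2*((α-a)*(β-b))*(inner ℝ u w : ℝ)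
              ≤ |2*((α-a)*(β-b))*(inner ℝ u w : ℝ)| := le_abs_self _
            _ = 2 * (|α-(a:ℝ)| * (|β-(b:ℝ)| * |(inner ℝ u w : ℝ)|)) := by
                rw [abs_mul, abs_mul, abs_mul, abs_two]; ring
            _ ≤ 2 * ((1/2) * ((1/2) * (‖u‖^2/2))) := by
                gcongr
            _ = ‖u‖^2/4 := by ring
        have hq : ‖w‖^2 ≤ ‖v'‖^2 := pow_le_pow_left₀ (norm_nonneg w) hge 2
        have hpq : ‖u‖^2 ≤ ‖w‖^2 := pow_le_pow_left₀ (norm_nonneg u) huw 2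
        have huu : (α-a)^2*‖u‖^2 ≤ (1/4)*‖u‖^2 := by nlinarith [sq_nonneg ‖u‖]
        have hww : (β-b)^2*‖w‖^2 ≤ (1/4)*‖w‖^2 := by nlinarith [sq_nonneg ‖w‖]
        have hwpos : (0:ℝ) < ‖w‖^2 := pow_pos (lt_of_lt_of_le hun huw) 2
        linarith
      have hα0 : α - (a:ℝ) = 0 := by
        by_contra hα0
        have hvv : (α - a) • u ∈ Λ := by
          have e : (α - a) • u = v' := by rw [hrep', hβ0, zero_smul, add_zero]
          rw [e]; exact hv'
        have hne : (α - a) • u ≠ 0 := smul_ne_zero hα0 hu0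
        have hge := humin _ hvv hne
        rw [norm_smul, Real.norm_eq_abs] at hge
        have h1 : (1:ℝ) ≤ |α - a| := by
          by_contra h'
          push_neg at h'
          nlinarith [abs_nonneg (α - (a:ℝ))]
        linarith
      refine ⟨a, b, ?_⟩
      rw [zcomb, hαβ]
      have h1 : α = (a:ℝ) := by linarith
      have h2 : β = (b:ℝ) := by linarith
      rw [h1, h2]
    · rintro ⟨a, b, rfl⟩
      rw [zcomb]
      exact add_mem hB (zsmul_mem hB a huΛ) (zsmul_mem hB b hwΛ)
  have hdet : latDet Λ = |cr u w| := by rw [latDet_eq hBuw, detB_cr]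
  have hsm : succMin Λ 1 = ‖u‖ := succMin_one u huΛ hu0 humin
  have hcr2 : cr u w ^ 2 = ‖u‖^2*‖w‖^2 - (inner ℝ u w : ℝ)^2 := by
    linarith [lagrange u w]
  have hkey : Real.sqrt 3 * ‖u‖^2 ≤ 2 * |cr u w| := by
    have hs2 : (inner ℝ u w : ℝ)^2 ≤ (‖u‖^2/2)^2 := by
      have := pow_le_pow_left₀ (abs_nonneg (inner ℝ u w : ℝ)) hinner 2
      rwa [sq_abs] at this
    have hpq : ‖u‖^2 ≤ ‖w‖^2 := pow_le_pow_left₀ (norm_nonneg u) huw 2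
    have h4 : 3 * (‖u‖^2)^2 ≤ (2 * |cr u w|)^2 := by
      have hc2 : (3/4) * (‖u‖^2)^2 ≤ cr u w ^ 2 := by nlinarith [sq_nonneg ‖u‖]
      nlinarith [sq_abs (cr u w)]
    have hl : Real.sqrt 3 * ‖u‖^2 = Real.sqrt (3 * (‖u‖^2)^2) := by
      rw [Real.sqrt_mul (by norm_num : (0:ℝ) ≤ 3), Real.sqrt_sq (sq_nonneg ‖u‖)]
    rw [hl]
    calc Real.sqrt (3*(‖u‖^2)^2) ≤ Real.sqrt ((2*|cr u w|)^2) := Real.sqrt_le_sqrt h4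
      _ = 2*|cr u w| := Real.sqrt_sq (by positivity)
  rw [density, hsm, hdet]
  have hcrpos : 0 < |cr u w| := abs_pos.mpr hcw
  have hs3 : 0 < Real.sqrt 3 := Real.sqrt_pos.mpr (by norm_num)
  rw [div_le_div_iff₀ (by positivity) (by positivity)]
  nlinarith [mul_le_mul_of_nonneg_left hkey Real.pi_pos.le, Real.pi_pos]

lemma density_hex : density hexLattice = π / (2 * Real.sqrt 3) := by
  set v₁ : E2 := (WithLp.equiv 2 (Fin 2 → ℝ)).symm ![1, 0] with hv₁
  set v₂ : E2 := (WithLp.equiv 2 (Fin 2 → ℝ)).symm ![1 / 2, Real.sqrt 3 / 2] with hv₂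
  have e10 : v₁ 0 = 1 := rfl
  have e11 : v₁ 1 = 0 := rfl
  have e20 : v₂ 0 = 1/2 := rfl
  have e21 : v₂ 1 = Real.sqrt 3 / 2 := rfl
  have hs3 : (0:ℝ) < Real.sqrt 3 := Real.sqrt_pos.mpr (by norm_num)
  have h3 : Real.sqrt 3 ^ 2 = 3 := Real.sq_sqrt (by norm_num)
  have hcr : cr v₁ v₂ = Real.sqrt 3 / 2 := by
    simp [cr, e10, e11, e20, e21]
  have hcrne : cr v₁ v₂ ≠ 0 := by rw [hcr]; positivity
  have hBhex : IsZBasis hexLattice v₁ v₂ := ⟨(indep_iff v₁ v₂).2 hcrne, rfl⟩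
  have hv₁mem : v₁ ∈ hexLattice := (mem_iff hBhex v₁).mpr ⟨1, 0, by push_cast; module⟩
  have hv₁ne : v₁ ≠ 0 := by
    intro h
    have : v₁ 0 = 0 := by rw [h]; rfl
    rw [e10] at this; norm_num at this
  have hnorm1 : ‖v₁‖ = 1 := by
    have h : ‖v₁‖^2 = 1 := by rw [normsq, e10, e11]; norm_num
    rw [← Real.sqrt_sq (norm_nonneg v₁), h, Real.sqrt_one]
  have hmin : ∀ v ∈ hexLattice, v ≠ 0 → ‖v₁‖ ≤ ‖v‖ := by
    intro v hv hvne
    obtain ⟨a, b, rfl⟩ := (mem_iff hBhex v).mp hv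
    have hab : a ≠ 0 ∨ b ≠ 0 := by
      by_contra h
      push_neg at h
      exact hvne (by rw [h.1, h.2]; push_cast; module)
    have hc0 : ((a:ℝ) • v₁ + (b:ℝ) • v₂) 0 = a + b/2 := by
      simp [PiLp.add_apply, PiLp.smul_apply, e10, e20]; ring
    have hc1 : ((a:ℝ) • v₁ + (b:ℝ) • v₂) 1 = b * (Real.sqrt 3 / 2) := by
      simp [PiLp.add_apply, PiLp.smul_apply, e11, e21]
    have hnsq : ‖(a:ℝ) • v₁ + (b:ℝ) • v₂‖^2 = (a:ℝ)^2 + a*b + b^2 := by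
      rw [normsq, hc0, hc1]
      linear_combination ((b:ℝ)^2/4) * h3
    have hposZ : 0 < a*a + a*b + b*b := by
      rcases eq_or_ne b 0 with hb | hb
      · have ha : a ≠ 0 := hab.resolve_right (by simp [hb])
        rw [hb]; simpa using mul_self_pos.mpr ha
      · nlinarith [sq_nonneg (2*a + b), mul_self_pos.mpr hb]
    have h1Z : 1 ≤ a*a + a*b + b*b := hposZ
    have h1R : (1:ℝ) ≤ (a:ℝ)^2 + a*b + b^2 := by
      have h' : ((1:ℤ):ℝ) ≤ ((a*a+a*b+b*b : ℤ):ℝ) := Int.cast_le.mpr h1Z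
      push_cast at h'
      nlinarith [h']
    rw [hnorm1]
    nlinarith [norm_nonneg ((a:ℝ) • v₁ + (b:ℝ) • v₂), hnsq]
  have hsm : succMin hexLattice 1 = 1 := by
    rw [succMin_one v₁ hv₁mem hv₁ne hmin, hnorm1]
  have hdet : latDet hexLattice = Real.sqrt 3 / 2 := by
    rw [latDet_eq hBhex, detB_cr, hcr, abs_of_pos (by positivity)]
  rw [density, hsm, hdet]
  rw [one_pow, mul_one]
  congr 1
  ring
end S11


/-- Every full-rank lattice `Λ ⊆ ℝ²` satisfies
`Δ(Λ) ≤ π/(2√3) = Δ(Λ_h)`. -/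
theorem stmt11 (Λ : Set E2) (hΛ : IsLattice Λ) :
    density Λ ≤ π / (2 * Real.sqrt 3) ∧ density Λ ≤ density hexLattice := ⟨S11.density_le Λ hΛ, by rw [S11.density_hex]; exact S11.density_le Λ hΛ⟩
end
end

section
/- Let Λ be a lattice of full rank in ℝ². Then Δ(Λ) = π/(2√3) if and only if Λ is similar to the hexagonal lattice Λ_h, i.e., the hexagonal lattice is, up to rotation and dilation, the unique maximizer of the lattice packing density in ℝ². -/
noncomputable section

open InnerProductGeometry Real
open scoped Classical

/-! ### Coordinate helpers -/

lemma e2_norm_sq (v : E2) : ‖v‖ ^ 2 = v 0 ^ 2 + v 1 ^ 2 := by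
  rw [EuclideanSpace.norm_eq, Real.sq_sqrt (by positivity)]
  simp [Fin.sum_univ_two, sq_abs]

lemma e2_add_apply (v w : E2) (i : Fin 2) : (v + w) i = v i + w i := rfl
lemma e2_smul_apply (c : ℝ) (v : E2) (i : Fin 2) : (c • v) i = c * v i := rfl
lemma e2_sub_apply (v w : E2) (i : Fin 2) : (v - w) i = v i - w i := rfl
lemma e2_zero_apply (i : Fin 2) : (0 : E2) i = 0 := rfl

lemma e2_zsmul_apply (c : ℤ) (v : E2) (i : Fin 2) : (c • v) i = (c : ℝ) * v i := by
  have h : (c • v) i = c • (v i) := rfl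
  rw [h, zsmul_eq_mul]

lemma e2_ext {v w : E2} (h0 : v 0 = w 0) (h1 : v 1 = w 1) : v = w := by
  ext i; fin_cases i <;> assumption

lemma e2_eq_zero_iff {v : E2} : v = 0 ↔ v 0 = 0 ∧ v 1 = 0 := by
  constructor
  · intro h; rw [h]; exact ⟨rfl, rfl⟩
  · rintro ⟨h0, h1⟩; exact e2_ext h0 h1

lemma lin_indep_iff_det (x₁ x₂ : E2) :
    LinearIndependent ℝ ![x₁, x₂] ↔ x₁ 0 * x₂ 1 - x₁ 1 * x₂ 0 ≠ 0 := by
  rw [LinearIndependent.pair_iff]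
  constructor
  · intro h
    by_contra hd
    rcases ne_or_eq (x₁ 1) 0 with h11 | h11
    · have := (h (x₂ 1) (-(x₁ 1)) (e2_ext
        (by simp only [e2_add_apply, e2_smul_apply, e2_zero_apply]; linear_combination hd)
        (by simp only [e2_add_apply, e2_smul_apply, e2_zero_apply]; ring))).2
      simp at this; exact h11 this
    · rcases ne_or_eq (x₂ 1) 0 with h21 | h21
      · have := (h (x₂ 1) (-(x₁ 1)) (e2_ext
          (by simp only [e2_add_apply, e2_smul_apply, e2_zero_apply]; linear_combination hd)
          (by simp only [e2_add_apply, e2_smul_apply, e2_zero_apply]; ring))).1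
        exact h21 this
      · rcases ne_or_eq (x₁ 0) 0 with h10 | h10
        · have := (h (x₂ 0) (-(x₁ 0)) (e2_ext
            (by simp only [e2_add_apply, e2_smul_apply, e2_zero_apply]; ring)
            (by simp only [e2_add_apply, e2_smul_apply, e2_zero_apply, h11, h21]; ring))).2
          simp at this; exact h10 this
        · have := (h 1 0 (e2_ext
            (by simp only [e2_add_apply, e2_smul_apply, e2_zero_apply, h10]; ring)
            (by simp only [e2_add_apply, e2_smul_apply, e2_zero_apply, h11]; ring))).1
          norm_num at this
  · intro hd s t hst
    have h0 : s * x₁ 0 + t * x₂ 0 = 0 := by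
      have := congrFun (congrArg WithLp.ofLp hst) 0; simpa [e2_add_apply, e2_smul_apply] using this
    have h1 : s * x₁ 1 + t * x₂ 1 = 0 := by
      have := congrFun (congrArg WithLp.ofLp hst) 1; simpa [e2_add_apply, e2_smul_apply] using this
    constructor
    · have : s * (x₁ 0 * x₂ 1 - x₁ 1 * x₂ 0) = 0 := by linear_combination x₂ 1 * h0 - x₂ 0 * h1
      exact (mul_eq_zero.1 this).resolve_right hd
    · have : t * (x₁ 0 * x₂ 1 - x₁ 1 * x₂ 0) = 0 := by linear_combination x₁ 0 * h1 - x₁ 1 * h0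
      exact (mul_eq_zero.1 this).resolve_right hd

/-! ### Basis facts and determinant invariance -/

lemma coeff_unique {x₁ x₂ : E2} (hli : LinearIndependent ℝ ![x₁, x₂]) {s t s' t' : ℝ}
    (h : s • x₁ + t • x₂ = s' • x₁ + t' • x₂) : s = s' ∧ t = t' := by
  have := LinearIndependent.pair_iff.1 hli (s - s') (t - t') (by
    rw [sub_smul, sub_smul]; rw [show s • x₁ - s' • x₁ + (t • x₂ - t' • x₂)
      = (s • x₁ + t • x₂) - (s' • x₁ + t' • x₂) by abel, h, sub_self])
  exact ⟨by linarith [this.1], by linarith [this.2]⟩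

lemma zcoeff_unique {x₁ x₂ : E2} (hli : LinearIndependent ℝ ![x₁, x₂]) {a b c d : ℤ}
    (h : a • x₁ + b • x₂ = c • x₁ + d • x₂) : a = c ∧ b = d := by
  have h' : (a:ℝ) • x₁ + (b:ℝ) • x₂ = (c:ℝ) • x₁ + (d:ℝ) • x₂ := by
    rw [Int.cast_smul_eq_zsmul, Int.cast_smul_eq_zsmul, Int.cast_smul_eq_zsmul,
      Int.cast_smul_eq_zsmul]; exact h
  have := coeff_unique hli h'
  exact ⟨Int.cast_injective this.1, Int.cast_injective this.2⟩

lemma zsmul_comb {x₁ x₂ : E2} (a b c d e f : ℤ) :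
    e • ((a:ℤ) • x₁ + b • x₂) + f • (c • x₁ + d • x₂)
      = (e*a + f*c) • x₁ + (e*b + f*d) • x₂ := by
  rw [smul_add, smul_add, smul_smul, smul_smul, smul_smul, smul_smul, add_smul, add_smul]
  abel

lemma comb_mem {Λ : Set E2} {x₁ x₂ : E2} (hx : IsZBasis Λ x₁ x₂) {y₁ y₂ : E2}
    (h₁ : y₁ ∈ Λ) (h₂ : y₂ ∈ Λ) (a b : ℤ) : a • y₁ + b • y₂ ∈ Λ := by
  rw [hx.2] at h₁ h₂ ⊢
  obtain ⟨a₁, b₁, rfl⟩ := h₁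
  obtain ⟨a₂, b₂, rfl⟩ := h₂
  exact ⟨a*a₁ + b*a₂, a*b₁ + b*b₂, zsmul_comb a₁ b₁ a₂ b₂ a b⟩

lemma basis_mem₁ {Λ : Set E2} {x₁ x₂ : E2} (hx : IsZBasis Λ x₁ x₂) : x₁ ∈ Λ := by
  rw [hx.2]; exact ⟨1, 0, by simp⟩

lemma basis_mem₂ {Λ : Set E2} {x₁ x₂ : E2} (hx : IsZBasis Λ x₁ x₂) : x₂ ∈ Λ := by
  rw [hx.2]; exact ⟨0, 1, by simp⟩

lemma detB_comb (x₁ x₂ : E2) (a b c d : ℝ) :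
    detB (a • x₁ + b • x₂) (c • x₁ + d • x₂) = |a*d - b*c| * detB x₁ x₂ := by
  unfold detB
  rw [← abs_mul]
  congr 1
  show (a * x₁ 0 + b * x₂ 0) * (c * x₁ 1 + d * x₂ 1)
      - (a * x₁ 1 + b * x₂ 1) * (c * x₁ 0 + d * x₂ 0) = _
  ring

lemma detB_zcomb (x₁ x₂ : E2) (a b c d : ℤ) :
    detB ((a:ℤ) • x₁ + b • x₂) (c • x₁ + d • x₂) = |(a*d - b*c : ℤ)| * detB x₁ x₂ := by
  have h : ∀ (m : ℤ) (v : E2), m • v = (m:ℝ) • v := fun m v => (Int.cast_smul_eq_zsmul ℝ m v).symm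
  rw [h a, h b, h c, h d, detB_comb]
  congr 1
  push_cast
  rfl

lemma detB_eq_of_bases {Λ : Set E2} {x₁ x₂ y₁ y₂ : E2}
    (hx : IsZBasis Λ x₁ x₂) (hy : IsZBasis Λ y₁ y₂) : detB y₁ y₂ = detB x₁ x₂ := by
  obtain ⟨a, b, hab⟩ : ∃ a b : ℤ, y₁ = a • x₁ + b • x₂ := by
    have := basis_mem₁ hy; rw [hx.2] at this; exact this
  obtain ⟨c, d, hcd⟩ : ∃ c d : ℤ, y₂ = c • x₁ + d • x₂ := by
    have := basis_mem₂ hy; rw [hx.2] at this; exact this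
  obtain ⟨e, f, hef⟩ : ∃ e f : ℤ, x₁ = e • y₁ + f • y₂ := by
    have := basis_mem₁ hx; rw [hy.2] at this; exact this
  obtain ⟨g, k, hgk⟩ : ∃ g k : ℤ, x₂ = g • y₁ + k • y₂ := by
    have := basis_mem₂ hx; rw [hy.2] at this; exact this
  have hx1 : ((e*a + f*c) : ℤ) • x₁ + ((e*b + f*d) : ℤ) • x₂ = (1:ℤ) • x₁ + (0:ℤ) • x₂ := by
    rw [← zsmul_comb, ← hab, ← hcd, ← hef]; simp
  have hx2 : ((g*a + k*c) : ℤ) • x₁ + ((g*b + k*d) : ℤ) • x₂ = (0:ℤ) • x₁ + (1:ℤ) • x₂ := by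
    rw [← zsmul_comb, ← hab, ← hcd, ← hgk]; simp
  have e1 := zcoeff_unique hx.1 hx1
  have e2 := zcoeff_unique hx.1 hx2
  have hdet : (a*d - b*c) * (e*k - f*g) = 1 := by
    linear_combination (g*b + k*d) * e1.1 - (g*a + k*c) * e1.2 + e2.2
  have habs : |(a*d - b*c : ℤ)| = 1 := by
    rcases Int.isUnit_iff.1 (IsUnit.of_mul_eq_one _ hdet) with h | h <;> rw [h] <;> rfl
  rw [hab, hcd, detB_zcomb, habs]
  simp

lemma latDet_eq {Λ : Set E2} {x₁ x₂ : E2} (hx : IsZBasis Λ x₁ x₂) :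
    latDet Λ = detB x₁ x₂ := by
  have hΛ : IsLattice Λ := ⟨x₁, x₂, hx⟩
  unfold latDet
  rw [dif_pos hΛ]
  exact detB_eq_of_bases hx hΛ.choose_spec.choose_spec

/-! ### Minimum existence and the first successive minimum -/

lemma detB_cs (v w : E2) : detB v w ≤ ‖v‖ * ‖w‖ := by
  have h2 : (v 0 * w 1 - v 1 * w 0)^2 ≤ (‖v‖ * ‖w‖)^2 := by
    rw [mul_pow, e2_norm_sq, e2_norm_sq]
    nlinarith [sq_nonneg (v 0 * w 0 + v 1 * w 1)]
  have hnn : (0:ℝ) ≤ ‖v‖ * ‖w‖ := mul_nonneg (norm_nonneg _) (norm_nonneg _)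
  unfold detB
  nlinarith [sq_abs (v 0 * w 1 - v 1 * w 0), abs_nonneg (v 0 * w 1 - v 1 * w 0)]

lemma coeff_bound {x₁ x₂ : E2} (a b : ℤ) :
    |(a:ℝ)| * detB x₁ x₂ ≤ ‖(a:ℤ) • x₁ + b • x₂‖ * ‖x₂‖ ∧
    |(b:ℝ)| * detB x₁ x₂ ≤ ‖(a:ℤ) • x₁ + b • x₂‖ * ‖x₁‖ := by
  set v := (a:ℤ) • x₁ + b • x₂ with hv
  constructor
  · have h1 : detB v x₂ = |(a:ℝ)| * detB x₁ x₂ := by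
      unfold detB
      rw [← abs_mul]
      congr 1
      simp only [hv, e2_add_apply, e2_zsmul_apply]
      ring
    rw [← h1]; exact detB_cs v x₂
  · have h1 : detB v x₁ = |(b:ℝ)| * detB x₁ x₂ := by
      unfold detB
      rw [abs_sub_comm, ← abs_mul]
      congr 1
      simp only [hv, e2_add_apply, e2_zsmul_apply]
      ring
    rw [← h1]; exact detB_cs v x₁

lemma detB_pos {x₁ x₂ : E2} (hli : LinearIndependent ℝ ![x₁, x₂]) : 0 < detB x₁ x₂ :=
  abs_pos.2 ((lin_indep_iff_det x₁ x₂).1 hli)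

lemma exists_min_prop {Λ : Set E2} {x₁ x₂ : E2} (hx : IsZBasis Λ x₁ x₂)
    (P : E2 → Prop) (w : E2) (hwΛ : w ∈ Λ) (hPw : P w) :
    ∃ v ∈ Λ, P v ∧ ∀ u ∈ Λ, P u → ‖v‖ ≤ ‖u‖ := by
  set d := detB x₁ x₂ with hd
  have hdpos : 0 < d := detB_pos hx.1
  set N : ℕ := ⌈‖w‖ * (‖x₁‖ + ‖x₂‖) / d⌉₊ with hN
  have key : ∀ a b : ℤ, ‖(a:ℤ) • x₁ + b • x₂‖ ≤ ‖w‖ →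
      (a, b) ∈ Finset.Icc ((-(N:ℤ), -(N:ℤ))) ((N:ℤ), (N:ℤ)) := by
    intro a b hnorm
    have hb := coeff_bound (x₁ := x₁) (x₂ := x₂) a b
    have hNge : ‖w‖ * (‖x₁‖ + ‖x₂‖) / d ≤ (N:ℝ) := Nat.le_ceil _
    have ha' : |(a:ℝ)| ≤ (N:ℝ) := by
      rw [div_le_iff₀ hdpos] at hNge
      have h2 : |(a:ℝ)| * d ≤ ‖w‖ * ‖x₂‖ :=
        le_trans hb.1 (mul_le_mul_of_nonneg_right hnorm (norm_nonneg _))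
      nlinarith [norm_nonneg x₁, norm_nonneg x₂, norm_nonneg w, abs_nonneg (a:ℝ)]
    have hb' : |(b:ℝ)| ≤ (N:ℝ) := by
      rw [div_le_iff₀ hdpos] at hNge
      have h2 : |(b:ℝ)| * d ≤ ‖w‖ * ‖x₁‖ :=
        le_trans hb.2 (mul_le_mul_of_nonneg_right hnorm (norm_nonneg _))
      nlinarith [norm_nonneg x₁, norm_nonneg x₂, norm_nonneg w, abs_nonneg (b:ℝ)]
    have ha : |a| ≤ (N:ℤ) := by
      exact_mod_cast (by rwa [← Int.cast_abs] at ha' : ((|a|:ℤ):ℝ) ≤ (N:ℝ))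
    have hb'' : |b| ≤ (N:ℤ) := by
      exact_mod_cast (by rwa [← Int.cast_abs] at hb' : ((|b|:ℤ):ℝ) ≤ (N:ℝ))
    rw [Finset.mem_Icc]
    rw [abs_le] at ha hb''
    exact ⟨⟨ha.1, hb''.1⟩, ⟨ha.2, hb''.2⟩⟩
  set T : Finset (ℤ × ℤ) := (Finset.Icc ((-(N:ℤ), -(N:ℤ))) ((N:ℤ), (N:ℤ))).filter
    (fun p => P ((p.1 : ℤ) • x₁ + p.2 • x₂)) with hT
  obtain ⟨a₀, b₀, hw0⟩ : ∃ a b : ℤ, w = a • x₁ + b • x₂ := by rw [hx.2] at hwΛ; exact hwΛ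
  have hwT : (a₀, b₀) ∈ T := by
    rw [hT, Finset.mem_filter]
    exact ⟨key a₀ b₀ (by rw [← hw0]), by rw [← hw0]; exact hPw⟩
  obtain ⟨p, hpT, hpmin⟩ := T.exists_min_image (fun p => ‖(p.1 : ℤ) • x₁ + p.2 • x₂‖) ⟨_, hwT⟩
  rw [hT, Finset.mem_filter] at hpT
  refine ⟨(p.1 : ℤ) • x₁ + p.2 • x₂, by rw [hx.2]; exact ⟨p.1, p.2, rfl⟩, hpT.2, ?_⟩
  intro u huΛ hPu
  obtain ⟨a, b, hu⟩ : ∃ a b : ℤ, u = a • x₁ + b • x₂ := by rw [hx.2] at huΛ; exact huΛ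
  rcases le_or_gt ‖u‖ ‖w‖ with hle | hlt
  · have hmem : (a, b) ∈ T := by
      rw [hT, Finset.mem_filter]
      exact ⟨key a b (by rw [← hu]; exact hle), by rw [← hu]; exact hPu⟩
    have := hpmin (a, b) hmem
    rwa [← hu] at this
  · have h1 := hpmin (a₀, b₀) hwT
    rw [← hw0] at h1
    linarith

lemma succMin_one_eq {Λ : Set E2} {v : E2} (hvΛ : v ∈ Λ) (hv0 : v ≠ 0)
    (hmin : ∀ u ∈ Λ, u ≠ 0 → ‖v‖ ≤ ‖u‖) : succMin Λ 1 = ‖v‖ := by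
  have hvpos : 0 < ‖v‖ := norm_pos_iff.2 hv0
  have hset : {r : ℝ | 0 < r ∧ ∃ u : Fin 1 → E2,
      (∀ j, u j ∈ Λ ∧ ‖u j‖ ≤ r) ∧ LinearIndependent ℝ u} = Set.Ici ‖v‖ := by
    ext r
    constructor
    · rintro ⟨hr, u, hu, hli⟩
      have h0 : u 0 ≠ 0 := hli.ne_zero 0
      exact le_trans (hmin (u 0) (hu 0).1 h0) (hu 0).2
    · intro hr
      refine ⟨lt_of_lt_of_le hvpos hr, fun _ => v, fun j => ⟨hvΛ, hr⟩, ?_⟩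
      exact linearIndependent_unique_iff.2 hv0
  unfold succMin
  rw [hset, csInf_Ici]

/-! ### Gauss reduction -/

lemma nsq_comb (y₁ y₂ : E2) (s t : ℝ) :
    ‖s • y₁ + t • y₂‖ ^ 2 = s^2 * ‖y₁‖^2
      + 2*(s*t*(y₁ 0 * y₂ 0 + y₁ 1 * y₂ 1)) + t^2 * ‖y₂‖^2 := by
  rw [e2_norm_sq, e2_norm_sq, e2_norm_sq]
  simp only [e2_add_apply, e2_smul_apply]
  ring

lemma reduce_arith {A B C σ τ : ℝ} (hA : 0 < A) (hAC : A ≤ C) (hB : 2*|B| ≤ A)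
    (hσ : |σ| ≤ 1/2) (hτ : |τ| ≤ 1/2)
    (h : C ≤ σ^2*A + 2*(σ*τ*B) + τ^2*C) : False := by
  have h1 : σ*τ*B ≤ |σ| * |τ| * |B| := by
    have h := le_abs_self (σ*τ*B)
    rwa [abs_mul, abs_mul] at h
  have hσ2 : σ^2 ≤ 1/4 := by nlinarith [abs_nonneg σ, sq_abs σ]
  have hτ2 : τ^2 ≤ 1/4 := by nlinarith [abs_nonneg τ, sq_abs τ]
  have h2 : |σ| * |τ| * |B| ≤ (1/2)*(1/2)*(A/2) := by
    have hBle : |B| ≤ A/2 := by linarith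
    have hh := mul_le_mul hτ hBle (abs_nonneg _) (by norm_num : (0:ℝ) ≤ 1/2)
    have hh2 := mul_le_mul hσ hh (by positivity) (by norm_num : (0:ℝ) ≤ 1/2)
    calc |σ| * |τ| * |B| = |σ| * (|τ| * |B|) := by ring
      _ ≤ (1/2) * ((1/2) * (A/2)) := hh2
      _ = (1/2)*(1/2)*(A/2) := by ring
  nlinarith

lemma exists_reduced {Λ : Set E2} {x₁ x₂ : E2} (hx : IsZBasis Λ x₁ x₂) :
    ∃ y₁ y₂ : E2, IsZBasis Λ y₁ y₂ ∧
      (∀ w ∈ Λ, w ≠ 0 → ‖y₁‖ ≤ ‖w‖) ∧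
      ‖y₁‖ ≤ ‖y₂‖ ∧
      0 ≤ y₁ 0 * y₂ 0 + y₁ 1 * y₂ 1 ∧
      2 * (y₁ 0 * y₂ 0 + y₁ 1 * y₂ 1) ≤ ‖y₁‖^2 := by
  have hx10 : x₁ ≠ 0 := by
    have := hx.1.ne_zero 0
    simpa using this
  obtain ⟨y₁, hy₁Λ, hy₁0, hy₁min⟩ :=
    exists_min_prop hx (fun v => v ≠ 0) x₁ (basis_mem₁ hx) hx10
  have hindep : ∃ w ∈ Λ, LinearIndependent ℝ ![y₁, w] := by
    by_cases h1 : LinearIndependent ℝ ![y₁, x₁]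
    · exact ⟨x₁, basis_mem₁ hx, h1⟩
    by_cases h2 : LinearIndependent ℝ ![y₁, x₂]
    · exact ⟨x₂, basis_mem₂ hx, h2⟩
    exfalso
    rw [lin_indep_iff_det, not_ne_iff] at h1 h2
    have hd := (lin_indep_iff_det x₁ x₂).1 hx.1
    rcases (not_and_or.1 (fun h => hy₁0 (e2_eq_zero_iff.2 h))) with h0 | h0
    · have : y₁ 0 * (x₁ 0 * x₂ 1 - x₁ 1 * x₂ 0) = 0 := by
        linear_combination x₁ 0 * h2 - x₂ 0 * h1
      exact hd ((mul_eq_zero.1 this).resolve_left h0)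
    · have : y₁ 1 * (x₁ 0 * x₂ 1 - x₁ 1 * x₂ 0) = 0 := by
        linear_combination x₁ 1 * h2 - x₂ 1 * h1
      exact hd ((mul_eq_zero.1 this).resolve_left h0)
  obtain ⟨w, hwΛ, hwind⟩ := hindep
  obtain ⟨y₂', hy₂'Λ, hy₂'ind, hy₂'min⟩ :=
    exists_min_prop hx (fun v => LinearIndependent ℝ ![y₁, v]) w hwΛ hwind
  obtain ⟨y₂, hy₂Λ, hy₂ind, hy₂min, hBnn⟩ :
      ∃ y₂, y₂ ∈ Λ ∧ LinearIndependent ℝ ![y₁, y₂] ∧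
        (∀ u ∈ Λ, LinearIndependent ℝ ![y₁, u] → ‖y₂‖ ≤ ‖u‖) ∧
        0 ≤ y₁ 0 * y₂ 0 + y₁ 1 * y₂ 1 := by
    rcases le_or_gt 0 (y₁ 0 * y₂' 0 + y₁ 1 * y₂' 1) with hB | hB
    · exact ⟨y₂', hy₂'Λ, hy₂'ind, hy₂'min, hB⟩
    · refine ⟨-y₂', ?_, ?_, ?_, ?_⟩
      · have : (0:ℤ) • y₁ + (-1:ℤ) • y₂' = -y₂' := by
          apply e2_ext <;>
            simp only [e2_add_apply, e2_zsmul_apply] <;> push_cast <;>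
            show _ = -(y₂' _) <;> ring
        rw [← this]; exact comb_mem hx hy₁Λ hy₂'Λ 0 (-1)
      · rw [lin_indep_iff_det] at hy₂'ind ⊢
        have hn : ∀ i : Fin 2, (-y₂') i = -(y₂' i) := fun i => rfl
        rw [hn 0, hn 1]
        intro h; apply hy₂'ind; linarith [h]
      · intro u hu hind
        rw [norm_neg]; exact hy₂'min u hu hind
      · have hn : ∀ i : Fin 2, (-y₂') i = -(y₂' i) := fun i => rfl
        rw [hn 0, hn 1]; nlinarith
  have hy₂0 : y₂ ≠ 0 := by
    intro h
    rw [lin_indep_iff_det, h] at hy₂ind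
    simp [e2_zero_apply] at hy₂ind
  have hy₁le : ‖y₁‖ ≤ ‖y₂‖ := hy₁min y₂ hy₂Λ hy₂0
  have hy₁pos : (0:ℝ) < ‖y₁‖ := norm_pos_iff.2 hy₁0
  set A := ‖y₁‖^2 with hA
  set B := y₁ 0 * y₂ 0 + y₁ 1 * y₂ 1 with hB
  set C := ‖y₂‖^2 with hC
  have hApos : 0 < A := by positivity
  have hAC : A ≤ C := by
    rw [hA, hC]; exact pow_le_pow_left₀ (norm_nonneg _) hy₁le 2
  have hδ := (lin_indep_iff_det y₁ y₂).1 hy₂ind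
  set δ := y₁ 0 * y₂ 1 - y₁ 1 * y₂ 0 with hδdef
  have h2B : 2 * B ≤ A := by
    have hsub : y₂ - y₁ ∈ Λ := by
      have : (-1:ℤ) • y₁ + (1:ℤ) • y₂ = y₂ - y₁ := by
        apply e2_ext <;>
          simp only [e2_add_apply, e2_zsmul_apply, e2_sub_apply] <;> push_cast <;> ring
      rw [← this]; exact comb_mem hx hy₁Λ hy₂Λ (-1) 1
    have hind : LinearIndependent ℝ ![y₁, y₂ - y₁] := by
      rw [lin_indep_iff_det]
      rw [e2_sub_apply, e2_sub_apply]
      intro h; apply hδ; linarith [h]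
    have hle := hy₂min (y₂ - y₁) hsub hind
    have hsq : ‖y₂‖^2 ≤ ‖y₂ - y₁‖^2 := pow_le_pow_left₀ (norm_nonneg _) hle 2
    rw [e2_norm_sq (y₂ - y₁), e2_sub_apply, e2_sub_apply] at hsq
    rw [hA, e2_norm_sq y₁, hB]
    rw [e2_norm_sq y₂] at hsq
    nlinarith [hsq]
  have hres : ∀ σ τ : ℝ, σ • y₁ + τ • y₂ ∈ Λ → |σ| ≤ 1/2 → |τ| ≤ 1/2 → σ = 0 ∧ τ = 0 := by
    intro σ τ hmem hσ hτ
    have hτ0 : τ = 0 := by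
      by_contra hτ0
      have hind : LinearIndependent ℝ ![y₁, σ • y₁ + τ • y₂] := by
        rw [lin_indep_iff_det]
        simp only [e2_add_apply, e2_smul_apply]
        intro h
        apply hτ0
        have : τ * δ = 0 := by rw [hδdef]; linear_combination h
        exact (mul_eq_zero.1 this).resolve_right hδ
      have hle := hy₂min _ hmem hind
      have hsq : C ≤ ‖σ • y₁ + τ • y₂‖^2 := pow_le_pow_left₀ (norm_nonneg _) hle 2
      rw [nsq_comb] at hsq
      have h2Babs : 2 * |B| ≤ A := by rwa [abs_of_nonneg hBnn]
      exact absurd hsq (by intro h; exact reduce_arith hApos hAC h2Babs hσ hτ h)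
    subst hτ0
    have hσ0 : σ = 0 := by
      by_contra hσ0
      have hmem' : σ • y₁ ∈ Λ := by
        have : σ • y₁ + (0:ℝ) • y₂ = σ • y₁ := by simp
        rwa [this] at hmem
      have hne : σ • y₁ ≠ 0 := smul_ne_zero hσ0 hy₁0
      have hle := hy₁min _ hmem' hne
      rw [norm_smul] at hle
      have : ‖y₁‖ ≤ (1/2) * ‖y₁‖ := by
        calc ‖y₁‖ ≤ ‖σ‖ * ‖y₁‖ := hle
        _ ≤ (1/2) * ‖y₁‖ := by
            apply mul_le_mul_of_nonneg_right _ (norm_nonneg _)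
            rwa [Real.norm_eq_abs]
      linarith
    exact ⟨hσ0, rfl⟩
  refine ⟨y₁, y₂, ⟨hy₂ind, ?_⟩, hy₁min, hy₁le, hBnn, h2B⟩
  ext v
  constructor
  · intro hvΛ
    set s := (v 0 * y₂ 1 - v 1 * y₂ 0) / δ with hs
    set t := (y₁ 0 * v 1 - y₁ 1 * v 0) / δ with ht
    have hv : v = s • y₁ + t • y₂ := by
      apply e2_ext <;> simp only [e2_add_apply, e2_smul_apply, hs, ht] <;>
        field_simp <;> ring
    set m := round s with hm
    set n := round t with hn
    have hv' : (s - (m:ℝ)) • y₁ + (t - (n:ℝ)) • y₂ ∈ Λ := by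
      have he : (s - (m:ℝ)) • y₁ + (t - (n:ℝ)) • y₂
          = (1:ℤ) • ((1:ℤ) • v + (-m) • y₁) + (-n) • y₂ := by
        apply e2_ext <;>
          simp only [e2_add_apply, e2_zsmul_apply, e2_smul_apply] <;> push_cast <;>
          rw [hv] <;> simp only [e2_add_apply, e2_smul_apply] <;> ring
      rw [he]
      exact comb_mem hx (comb_mem hx hvΛ hy₁Λ 1 (-m)) hy₂Λ 1 (-n)
    have hz := hres _ _ hv' (abs_sub_round s) (abs_sub_round t)
    have hsm : s = (m:ℝ) := by linarith [hz.1]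
    have htn : t = (n:ℝ) := by linarith [hz.2]
    refine ⟨m, n, ?_⟩
    rw [hv, hsm, htn]
    apply e2_ext <;> simp only [e2_add_apply, e2_smul_apply, e2_zsmul_apply]
  · rintro ⟨a, b, rfl⟩
    exact comb_mem hx hy₁Λ hy₂Λ a b

/-! ### Matrix interface -/

lemma e2_matrix_apply (U : Matrix (Fin 2) (Fin 2) ℝ) (v : E2) (i : Fin 2) :
    (Matrix.toEuclideanLin U v) i = U i 0 * v 0 + U i 1 * v 1 := by
  rw [Matrix.toEuclideanLin_apply]
  show (Matrix.mulVec U (fun j => v j)) i = _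
  rw [Matrix.mulVec, dotProduct, Fin.sum_univ_two]

lemma e2_lmap_apply (α : ℝ) (U : Matrix (Fin 2) (Fin 2) ℝ) (v : E2) (i : Fin 2) :
    ((α • Matrix.toEuclideanLin U) v) i = α * (U i 0 * v 0 + U i 1 * v 1) := by
  rw [LinearMap.smul_apply]
  show α * (Matrix.toEuclideanLin U v) i = _
  rw [e2_matrix_apply]

lemma uTu_entries {U : Matrix (Fin 2) (Fin 2) ℝ} (h : U.transpose * U = 1) :
    U 0 0 ^ 2 + U 1 0 ^ 2 = 1 ∧ U 0 0 * U 0 1 + U 1 0 * U 1 1 = 0 ∧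
      U 0 1 ^ 2 + U 1 1 ^ 2 = 1 := by
  refine ⟨?_, ?_, ?_⟩
  · have := congrFun (congrFun h 0) 0
    simp only [Matrix.mul_apply, Fin.sum_univ_two, Matrix.one_apply, Matrix.transpose_apply] at this
    simpa [sq] using this
  · have := congrFun (congrFun h 0) 1
    simp only [Matrix.mul_apply, Fin.sum_univ_two, Matrix.one_apply, Matrix.transpose_apply] at this
    simpa [sq] using this
  · have := congrFun (congrFun h 1) 1
    simp only [Matrix.mul_apply, Fin.sum_univ_two, Matrix.one_apply, Matrix.transpose_apply] at this
    simpa [sq] using this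

lemma norm_eq_of_sq_eq {a b : ℝ} (h : a^2 = b^2) (ha : 0 ≤ a) (hb : 0 ≤ b) : a = b := by
  nlinarith

/-! ### The hexagonal lattice -/

def hexv₁ : E2 := (WithLp.equiv 2 (Fin 2 → ℝ)).symm ![1, 0]
def hexv₂ : E2 := (WithLp.equiv 2 (Fin 2 → ℝ)).symm ![1 / 2, Real.sqrt 3 / 2]

lemma hexv₁_apply : hexv₁ 0 = 1 ∧ hexv₁ 1 = 0 := by constructor <;> simp [hexv₁]
lemma hexv₂_apply : hexv₂ 0 = 1/2 ∧ hexv₂ 1 = Real.sqrt 3 / 2 := by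
  constructor <;> simp [hexv₂]

lemma sqrt3_sq : Real.sqrt 3 ^ 2 = 3 := Real.sq_sqrt (by norm_num)
lemma sqrt3_pos : 0 < Real.sqrt 3 := Real.sqrt_pos.2 (by norm_num)

lemma hex_mem_iff {v : E2} : v ∈ hexLattice ↔ ∃ a b : ℤ, v = a • hexv₁ + b • hexv₂ :=
  Iff.rfl

lemma hex_basis : IsZBasis hexLattice hexv₁ hexv₂ := by
  constructor
  · rw [lin_indep_iff_det, hexv₁_apply.1, hexv₁_apply.2, hexv₂_apply.1, hexv₂_apply.2]
    have := sqrt3_pos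
    intro h; nlinarith
  · rfl

lemma int_form_bound (a b : ℤ) (h : ¬(a = 0 ∧ b = 0)) : 1 ≤ a^2 + a*b + b^2 := by
  rcases eq_or_ne b 0 with hb | hb
  · subst hb
    have ha : a ≠ 0 := fun h' => h ⟨h', rfl⟩
    have := Int.one_le_abs ha
    nlinarith [sq_nonneg a, abs_nonneg a, sq_abs a]
  · have := Int.one_le_abs hb
    nlinarith [sq_nonneg (2*a + b), sq_abs b, abs_nonneg b]

lemma hex_norm_sq (a b : ℤ) :
    ‖(a:ℤ) • hexv₁ + b • hexv₂‖^2 = ((a:ℝ)^2 + a*b + b^2) := by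
  rw [e2_norm_sq]
  simp only [e2_add_apply, e2_zsmul_apply, hexv₁_apply.1, hexv₁_apply.2,
    hexv₂_apply.1, hexv₂_apply.2]
  have h3 := sqrt3_sq
  nlinarith [h3]

lemma hexv₁_norm : ‖hexv₁‖ = 1 := by
  apply norm_eq_of_sq_eq _ (norm_nonneg _) zero_le_one
  rw [e2_norm_sq, hexv₁_apply.1, hexv₁_apply.2]; norm_num

lemma hexv₁_ne : hexv₁ ≠ 0 := by
  intro h
  have := congrFun (congrArg WithLp.ofLp h) 0
  rw [hexv₁_apply.1] at this
  exact one_ne_zero this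

lemma hex_min : ∀ w ∈ hexLattice, w ≠ 0 → ‖hexv₁‖ ≤ ‖w‖ := by
  intro w hw hw0
  obtain ⟨a, b, rfl⟩ := hex_mem_iff.1 hw
  have hab : ¬(a = 0 ∧ b = 0) := by
    rintro ⟨rfl, rfl⟩
    simp at hw0
  have h1 : (1:ℝ) ≤ ‖(a:ℤ) • hexv₁ + b • hexv₂‖^2 := by
    rw [hex_norm_sq]
    have := int_form_bound a b hab
    have : (1:ℝ) ≤ ((a^2 + a*b + b^2 : ℤ) : ℝ) := by exact_mod_cast this
    push_cast at this
    linarith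
  rw [hexv₁_norm]
  nlinarith [norm_nonneg ((a:ℤ) • hexv₁ + b • hexv₂)]

lemma hex_succMin : succMin hexLattice 1 = 1 := by
  rw [succMin_one_eq (basis_mem₁ hex_basis) hexv₁_ne hex_min, hexv₁_norm]

lemma hex_latDet : latDet hexLattice = Real.sqrt 3 / 2 := by
  rw [latDet_eq hex_basis]
  unfold detB
  rw [hexv₁_apply.1, hexv₁_apply.2, hexv₂_apply.1, hexv₂_apply.2]
  rw [abs_of_pos (by have := sqrt3_pos; nlinarith)]
  ring

lemma hex_density : density hexLattice = π / (2 * Real.sqrt 3) := by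
  unfold density
  rw [hex_succMin, hex_latDet]
  have h3 := sqrt3_pos
  have h3' := sqrt3_sq
  field_simp
  nlinarith [Real.pi_pos]

lemma hUUt_gen (p0 p1 q0 q1 A lam s3 δ : ℝ)
    (hδ : δ = p0*q1 - p1*q0) (hδ0 : δ ≠ 0)
    (hA' : p0^2 + p1^2 = A) (hCA : q0^2 + q1^2 = A) (hB' : p0*q0 + p1*q1 = A/2)
    (hlamsq : lam^2 = A) (hs3sq : s3^2 = 3) :
    (!![lam*(q1 - p1/2)/δ, lam*(-q0 + p0/2)/δ;
        lam*(-(s3/2)*p1)/δ, lam*((s3/2)*p0)/δ] : Matrix (Fin 2) (Fin 2) ℝ).transpose *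
      !![lam*(q1 - p1/2)/δ, lam*(-q0 + p0/2)/δ;
         lam*(-(s3/2)*p1)/δ, lam*((s3/2)*p0)/δ] = 1 := by
  have hδsq : δ^2 = 3/4 * A^2 := by
    have h : δ^2 = (p0^2+p1^2)*(q0^2+q1^2) - (p0*q0 + p1*q1)^2 := by rw [hδ]; ring
    rw [hA', hCA, hB'] at h
    rw [h]; ring
  apply mul_eq_one_comm.1
  ext i j
  fin_cases i <;> fin_cases j <;>
    simp only [Matrix.mul_apply, Fin.sum_univ_two, Matrix.transpose_apply,
      Matrix.cons_val', Matrix.cons_val_zero, Matrix.cons_val_one, Matrix.head_cons,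
      Matrix.head_fin_const, Matrix.empty_val', Matrix.cons_val_fin_one,
      Matrix.one_apply_eq, Matrix.one_apply_ne, Matrix.of_apply, ne_eq, Fin.zero_eta, Fin.mk_one, Fin.isValue, Matrix.one_fin_two] <;>
    field_simp
  · linear_combination (3*((q1 - p1/2)^2 + (-q0 + p0/2)^2) + 3*A/4) * hlamsq
      + (3*A + lam^2) * hCA - (3*A + lam^2) * hB' + (3*A/4 + lam^2/4) * hA' - 4 * hδsq
  · linear_combination (lam^2*s3) * hA' - (2*lam^2*s3) * hB'
  · linear_combination (lam^2*s3) * hA' - (2*lam^2*s3) * hB'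
  · linear_combination (3*(((s3/2)*p1)^2 + ((s3/2)*p0)^2) + 3*A/4) * hlamsq
      + ((3*A/4 + lam^2/4)*(p0^2+p1^2)) * hs3sq + (9*A/4 + 3*lam^2/4) * hA' - 4 * hδsq


lemma hex_similar_of {Λ : Set E2} {y₁ y₂ : E2} (hy : IsZBasis Λ y₁ y₂) {A : ℝ}
    (hApos : 0 < A)
    (hA' : y₁ 0 ^ 2 + y₁ 1 ^ 2 = A) (hCA : y₂ 0 ^ 2 + y₂ 1 ^ 2 = A)
    (hB' : y₁ 0 * y₂ 0 + y₁ 1 * y₂ 1 = A/2) :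
    LatSimilar Λ hexLattice := by
  have hδ0 : y₁ 0 * y₂ 1 - y₁ 1 * y₂ 0 ≠ 0 := (lin_indep_iff_det y₁ y₂).1 hy.1
  set lam := Real.sqrt A with hlamdef
  have hlamsq : lam^2 = A := Real.sq_sqrt hApos.le
  have hlampos : 0 < lam := Real.sqrt_pos.2 hApos
  have hlam0 : lam ≠ 0 := ne_of_gt hlampos
  set s3 := Real.sqrt 3 with hs3def
  have hs3sq : s3^2 = 3 := Real.sq_sqrt (by norm_num)
  set U : Matrix (Fin 2) (Fin 2) ℝ :=
    !![lam*((y₂ 1) - (y₁ 1)/2)/((y₁ 0)*(y₂ 1) - (y₁ 1)*(y₂ 0)), lam*(-(y₂ 0) + (y₁ 0)/2)/((y₁ 0)*(y₂ 1) - (y₁ 1)*(y₂ 0));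
       lam*(-(s3/2)*(y₁ 1))/((y₁ 0)*(y₂ 1) - (y₁ 1)*(y₂ 0)), lam*((s3/2)*(y₁ 0))/((y₁ 0)*(y₂ 1) - (y₁ 1)*(y₂ 0))] with hUdef
  have hU00 : U 0 0 = lam*((y₂ 1) - (y₁ 1)/2)/((y₁ 0)*(y₂ 1) - (y₁ 1)*(y₂ 0)) := by simp [hUdef]
  have hU01 : U 0 1 = lam*(-(y₂ 0) + (y₁ 0)/2)/((y₁ 0)*(y₂ 1) - (y₁ 1)*(y₂ 0)) := by simp [hUdef]
  have hU10 : U 1 0 = lam*(-(s3/2)*(y₁ 1))/((y₁ 0)*(y₂ 1) - (y₁ 1)*(y₂ 0)) := by simp [hUdef]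
  have hU11 : U 1 1 = lam*((s3/2)*(y₁ 0))/((y₁ 0)*(y₂ 1) - (y₁ 1)*(y₂ 0)) := by simp [hUdef]
  have hUorth : U.transpose * U = 1 :=
    hUUt_gen (y₁ 0) (y₁ 1) (y₂ 0) (y₂ 1) A lam s3 ((y₁ 0)*(y₂ 1) - (y₁ 1)*(y₂ 0)) rfl hδ0 hA' hCA hB' hlamsq hs3sq
  refine ⟨1/lam, U, one_div_ne_zero hlam0, hUorth, ?_⟩
  show hexLattice = ⇑((1/lam) • Matrix.toEuclideanLin U) '' Λ
  set L := (1/lam) • Matrix.toEuclideanLin U with hL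
  have hTy₁ : L y₁ = hexv₁ := by
    apply e2_ext
    · rw [hL, e2_lmap_apply, hU00, hU01, hexv₁_apply.1]
      have hδ0' : y₂ 1 * y₁ 0 - y₁ 1 * y₂ 0 ≠ 0 := by intro h; apply hδ0; linarith
      field_simp
      ring
    · rw [hL, e2_lmap_apply, hU10, hU11, hexv₁_apply.2]
      field_simp
      ring
  have hTy₂ : L y₂ = hexv₂ := by
    apply e2_ext
    · rw [hL, e2_lmap_apply, hU00, hU01, hexv₂_apply.1]
      have hδ0' : y₂ 1 * y₁ 0 - y₁ 1 * y₂ 0 ≠ 0 := by intro h; apply hδ0; linarith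
      field_simp
      ring
    · rw [hL, e2_lmap_apply, hU10, hU11, hexv₂_apply.2]
      field_simp
      ring
  ext w
  rw [hex_mem_iff, Set.mem_image]
  constructor
  · rintro ⟨a, b, rfl⟩
    exact ⟨a • y₁ + b • y₂, comb_mem hy (basis_mem₁ hy) (basis_mem₂ hy) a b,
      by rw [map_add, map_zsmul, map_zsmul, hTy₁, hTy₂]⟩
  · rintro ⟨u, huΛ, rfl⟩
    rw [hy.2] at huΛ
    obtain ⟨a, b, rfl⟩ := huΛ
    exact ⟨a, b, by rw [map_add, map_zsmul, map_zsmul, hTy₁, hTy₂]⟩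

lemma sim_norm {α : ℝ} {U : Matrix (Fin 2) (Fin 2) ℝ} (hU : U.transpose * U = 1)
    (v : E2) : ‖(α • Matrix.toEuclideanLin U) v‖ = |α| * ‖v‖ := by
  obtain ⟨r1, r2, r3⟩ := uTu_entries hU
  apply norm_eq_of_sq_eq _ (norm_nonneg _) (by positivity)
  rw [mul_pow, sq_abs, e2_norm_sq, e2_norm_sq]
  rw [e2_lmap_apply, e2_lmap_apply]
  linear_combination (α^2 * v 0^2) * r1 + (2*α^2 * v 0 * v 1) * r2 + (α^2 * v 1^2) * r3

lemma sim_zbasis {Λ : Set E2} {x₁ x₂ : E2} (hx : IsZBasis Λ x₁ x₂) {α : ℝ} (hα : α ≠ 0)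
    {U : Matrix (Fin 2) (Fin 2) ℝ} (hU : U.transpose * U = 1) :
    IsZBasis ((⇑(α • Matrix.toEuclideanLin U)) '' Λ)
      ((α • Matrix.toEuclideanLin U) x₁) ((α • Matrix.toEuclideanLin U) x₂) := by
  set L := α • Matrix.toEuclideanLin U with hL
  constructor
  · rw [LinearIndependent.pair_iff]
    intro s t hst
    have h0 : L (s • x₁ + t • x₂) = 0 := by
      rw [map_add, map_smul, map_smul]; exact hst
    have hn : ‖s • x₁ + t • x₂‖ = 0 := by
      have := sim_norm hU (α := α) (s • x₁ + t • x₂)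
      rw [h0, norm_zero] at this
      have habs : |α| ≠ 0 := abs_ne_zero.2 hα
      rcases mul_eq_zero.1 this.symm with h | h
      · exact absurd h habs
      · exact h
    exact LinearIndependent.pair_iff.1 hx.1 s t (norm_eq_zero.1 hn)
  · ext w
    rw [Set.mem_image]
    constructor
    · rintro ⟨u, huΛ, rfl⟩
      rw [hx.2] at huΛ
      obtain ⟨a, b, rfl⟩ := huΛ
      exact ⟨a, b, by rw [map_add, map_zsmul, map_zsmul]⟩
    · rintro ⟨a, b, rfl⟩
      exact ⟨a • x₁ + b • x₂, comb_mem hx (basis_mem₁ hx) (basis_mem₂ hx) a b,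
        by rw [map_add, map_zsmul, map_zsmul]⟩

lemma sim_detB {x₁ x₂ : E2} (α : ℝ) {U : Matrix (Fin 2) (Fin 2) ℝ}
    (hU : U.transpose * U = 1) :
    detB ((α • Matrix.toEuclideanLin U) x₁) ((α • Matrix.toEuclideanLin U) x₂)
      = α^2 * detB x₁ x₂ := by
  obtain ⟨r1, r2, r3⟩ := uTu_entries hU
  set d := U 0 0 * U 1 1 - U 0 1 * U 1 0 with hd
  have hd2 : d^2 = 1 := by
    rw [hd]
    linear_combination (U 0 1^2 + U 1 1^2) * r1 + r3 - (U 0 0*U 0 1 + U 1 0*U 1 1) * r2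
  have habs : |d| = 1 := by
    have h2 : (d - 1) * (d + 1) = 0 := by linear_combination hd2
    rcases mul_eq_zero.1 h2 with h | h
    · rw [show d = 1 by linarith]; norm_num
    · rw [show d = -1 by linarith]; norm_num
  unfold detB
  have key : ((α • Matrix.toEuclideanLin U) x₁) 0 * ((α • Matrix.toEuclideanLin U) x₂) 1
      - ((α • Matrix.toEuclideanLin U) x₁) 1 * ((α • Matrix.toEuclideanLin U) x₂) 0
      = (α^2 * d) * (x₁ 0 * x₂ 1 - x₁ 1 * x₂ 0) := by
    rw [e2_lmap_apply, e2_lmap_apply, e2_lmap_apply, e2_lmap_apply, hd]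
    ring
  rw [key, abs_mul, abs_mul, habs, abs_of_nonneg (sq_nonneg α)]
  ring

/-! ### Main theorem -/

set_option maxHeartbeats 1600000 in
/-- A full-rank lattice `Λ ⊆ ℝ²` satisfies `Δ(Λ) = π/(2√3)` iff `Λ` is
similar to the hexagonal lattice. -/
theorem stmt12 (Λ : Set E2) (hΛ : IsLattice Λ) :
    density Λ = π / (2 * Real.sqrt 3) ↔ LatSimilar Λ hexLattice := by
  obtain ⟨x₁, x₂, hx⟩ := hΛ
  constructor
  · -- forward direction
    intro hdens
    obtain ⟨y₁, y₂, hy, hy₁min, hy₁le, hBnn, h2B⟩ := exists_reduced hx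
    have hy₁Λ : y₁ ∈ Λ := basis_mem₁ hy
    have hy₁0 : y₁ ≠ 0 := by have := hy.1.ne_zero 0; simpa using this
    have hδ0 : y₁ 0 * y₂ 1 - y₁ 1 * y₂ 0 ≠ 0 := (lin_indep_iff_det y₁ y₂).1 hy.1
    set A := ‖y₁‖^2 with hA
    have hAc : A = y₁ 0^2 + y₁ 1^2 := e2_norm_sq y₁
    have hCc : ‖y₂‖^2 = y₂ 0^2 + y₂ 1^2 := e2_norm_sq y₂
    have hApos : 0 < A := by
      rw [hA]; have h := norm_pos_iff.2 hy₁0; positivity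
    have hAC : A ≤ ‖y₂‖^2 := by
      rw [hA]; exact pow_le_pow_left₀ (norm_nonneg _) hy₁le 2
    have hsm : succMin Λ 1 = ‖y₁‖ := succMin_one_eq hy₁Λ hy₁0 hy₁min
    have hld : latDet Λ = |y₁ 0 * y₂ 1 - y₁ 1 * y₂ 0| := latDet_eq hy
    have hDpos : 0 < |y₁ 0 * y₂ 1 - y₁ 1 * y₂ 0| := abs_pos.2 hδ0
    have h3p := sqrt3_pos
    have hπ := Real.pi_pos
    have hdel : |y₁ 0 * y₂ 1 - y₁ 1 * y₂ 0| = Real.sqrt 3 / 2 * A := by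
      unfold density at hdens
      rw [hsm, hld, ← hA] at hdens
      rw [div_eq_div_iff (by positivity) (by positivity)] at hdens
      have h5 : π * (A * (2 * Real.sqrt 3))
          = π * (4 * |y₁ 0 * y₂ 1 - y₁ 1 * y₂ 0|) := by linear_combination hdens
      have h6 := mul_left_cancel₀ (ne_of_gt hπ) h5
      linear_combination (-1/4 : ℝ) * h6
    have hδsq : (y₁ 0 * y₂ 1 - y₁ 1 * y₂ 0)^2 = 3/4 * A^2 := by
      rw [← sq_abs, hdel]
      linear_combination (A^2/4) * sqrt3_sq
    have hlag : (y₁ 0 * y₂ 1 - y₁ 1 * y₂ 0)^2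
        = (y₁ 0^2 + y₁ 1^2) * (y₂ 0^2 + y₂ 1^2) - (y₁ 0 * y₂ 0 + y₁ 1 * y₂ 1)^2 := by
      ring
    have hBnn' : 0 ≤ y₁ 0 * y₂ 0 + y₁ 1 * y₂ 1 := hBnn
    have h2B' : 2 * (y₁ 0 * y₂ 0 + y₁ 1 * y₂ 1) ≤ A := by rw [hA]; exact h2B
    have hBsq : (y₁ 0 * y₂ 0 + y₁ 1 * y₂ 1)^2 ≤ A^2/4 := by nlinarith
    have hACc : A ≤ y₂ 0^2 + y₂ 1^2 := by rw [← hCc]; exact hAC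
    have hkey : A * (y₂ 0^2 + y₂ 1^2) - (y₁ 0 * y₂ 0 + y₁ 1 * y₂ 1)^2 = 3/4 * A^2 := by
      rw [← hδsq, hlag, hAc]
    have hCA : y₂ 0^2 + y₂ 1^2 = A := by
      have hle : A * (y₂ 0^2 + y₂ 1^2) ≤ A * A := by nlinarith
      have := (mul_le_mul_iff_right₀ hApos).1 hle
      linarith
    have hBA : y₁ 0 * y₂ 0 + y₁ 1 * y₂ 1 = A/2 := by
      have h1 : A * A - (y₁ 0 * y₂ 0 + y₁ 1 * y₂ 1)^2 = 3/4 * A^2 := by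
        linear_combination hkey - A * hCA
      have h2 : ((y₁ 0 * y₂ 0 + y₁ 1 * y₂ 1) - A/2) * ((y₁ 0 * y₂ 0 + y₁ 1 * y₂ 1) + A/2)
          = 0 := by linear_combination -h1
      rcases mul_eq_zero.1 h2 with h | h
      · linarith
      · nlinarith
    exact hex_similar_of hy hApos hAc.symm hCA hBA
  · -- backward direction
    rintro ⟨α, U, hα, hU, him⟩
    have him' : hexLattice = ⇑(α • Matrix.toEuclideanLin U) '' Λ := him
    have hximg : IsZBasis hexLattice ((α • Matrix.toEuclideanLin U) x₁)
        ((α • Matrix.toEuclideanLin U) x₂) := by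
      rw [him']; exact sim_zbasis hx hα hU
    have hx10 : x₁ ≠ 0 := by have := hx.1.ne_zero 0; simpa using this
    obtain ⟨v, hvΛ, hv0, hvmin⟩ :=
      exists_min_prop hx (fun v => v ≠ 0) x₁ (basis_mem₁ hx) hx10
    have hvpos : 0 < ‖v‖ := norm_pos_iff.2 hv0
    have hLv : ‖(α • Matrix.toEuclideanLin U) v‖ = |α| * ‖v‖ := sim_norm hU v
    have hαpos : 0 < |α| := abs_pos.2 hα
    have hLv0 : (α • Matrix.toEuclideanLin U) v ≠ 0 := by
      intro h; rw [h, norm_zero] at hLv; nlinarith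
    have hLvmem : (α • Matrix.toEuclideanLin U) v ∈ hexLattice := by
      rw [him']; exact Set.mem_image_of_mem _ hvΛ
    have hLvmin : ∀ w ∈ hexLattice, w ≠ 0 → ‖(α • Matrix.toEuclideanLin U) v‖ ≤ ‖w‖ := by
      intro w hw hw0
      rw [him'] at hw
      obtain ⟨u, huΛ, rfl⟩ := hw
      have hu0 : u ≠ 0 := by rintro rfl; rw [map_zero] at hw0; exact hw0 rfl
      rw [hLv, sim_norm hU u]
      exact mul_le_mul_of_nonneg_left (hvmin u huΛ hu0) (abs_nonneg α)
    have h1 : succMin hexLattice 1 = ‖(α • Matrix.toEuclideanLin U) v‖ :=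
      succMin_one_eq hLvmem hLv0 hLvmin
    have h2 : |α| * ‖v‖ = 1 := by rw [← hLv, ← h1, hex_succMin]
    have h4 : α^2 * detB x₁ x₂ = Real.sqrt 3 / 2 := by
      rw [← sim_detB α hU, ← latDet_eq hximg, hex_latDet]
    have hsmΛ : succMin Λ 1 = ‖v‖ := succMin_one_eq hvΛ hv0 hvmin
    have hldΛ : latDet Λ = detB x₁ x₂ := latDet_eq hx
    unfold density
    rw [hsmΛ, hldΛ]
    have hdpos : 0 < detB x₁ x₂ := detB_pos hx.1
    have h3p := sqrt3_pos
    have h2' : (|α| * ‖v‖) * (|α| * ‖v‖) = 1 := by rw [h2]; norm_num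
    have hm2 : α^2 * ‖v‖^2 = 1 := by
      linear_combination (-‖v‖^2) * (sq_abs α) + h2'
    rw [div_eq_div_iff (by positivity) (by positivity)]
    have hα2 : (α^2 : ℝ) ≠ 0 := pow_ne_zero 2 hα
    apply mul_left_cancel₀ hα2
    linear_combination (2 * Real.sqrt 3 * π) * hm2 - (4 * π) * h4
end
end

section
/- Let Λ be a well-rounded lattice of full rank in ℝ². Then Δ(Λ) = π/(4 sin θ(Λ)) ≤ π/(2√3), with equality if and only if θ(Λ) = π/3; that is, among well-rounded lattices the packing density is maximized exactly by those with angle π/3, and these are precisely the lattices similar to the hexagonal lattice Λ_h. -/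
set_option maxHeartbeats 1000000
noncomputable section

open InnerProductGeometry Real
open scoped Classical

namespace S16

local notation "⟪" x ", " y "⟫" => @inner ℝ _ _ x y

lemma ip_coords (x y : E2) : ⟪x, y⟫ = x 0 * y 0 + x 1 * y 1 := by
  simp [PiLp.inner_apply, Fin.sum_univ_two, RCLike.inner_apply]; ring

lemma nsq_coords (x : E2) : ‖x‖ ^ 2 = x 0 ^ 2 + x 1 ^ 2 := by
  rw [← real_inner_self_eq_norm_sq, ip_coords]; ring

lemma e2ext {x y : E2} (h0 : x 0 = y 0) (h1 : x 1 = y 1) : x = y := by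
  apply PiLp.ext; intro i; fin_cases i <;> assumption

lemma smul_coord (a : ℝ) (x : E2) (i : Fin 2) : (a • x) i = a * x i := rfl
lemma add_coord (x y : E2) (i : Fin 2) : (x + y) i = x i + y i := rfl
lemma sub_coord (x y : E2) (i : Fin 2) : (x - y) i = x i - y i := rfl
lemma neg_coord (x : E2) (i : Fin 2) : (-x) i = -(x i) := rfl
lemma zero_coord (i : Fin 2) : (0 : E2) i = 0 := rfl

/-- the cross product / determinant -/
def cross (x y : E2) : ℝ := x 0 * y 1 - x 1 * y 0

lemma cross_ne_iff (x y : E2) : LinearIndependent ℝ ![x, y] ↔ cross x y ≠ 0 := by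
  rw [linearIndependent_fin2, cross]
  simp only [Matrix.cons_val_one, Matrix.head_cons, Matrix.cons_val_zero]
  constructor
  · rintro ⟨hy, h⟩ hc
    by_cases hy0 : y 0 ≠ 0
    · exact h (x 0 / y 0) (e2ext (by rw [smul_coord]; field_simp) (by rw [smul_coord]; field_simp; nlinarith))
    · push_neg at hy0
      have hy1 : y 1 ≠ 0 := fun hy1 => hy (e2ext (by simp [hy0]) (by simp [hy1]))
      exact h (x 1 / y 1) (e2ext (by rw [smul_coord]; field_simp; nlinarith) (by rw [smul_coord]; field_simp))
  · intro hc
    constructor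
    · intro h; rw [h] at hc; simp at hc
    · intro a ha
      have h0 : a * y 0 = x 0 := by rw [← ha]; rfl
      have h1 : a * y 1 = x 1 := by rw [← ha]; rfl
      exact hc (by rw [← h0, ← h1]; ring)

lemma cross_combo (x y : E2) (a b c d : ℝ) :
    cross (a • x + b • y) (c • x + d • y) = (a * d - b * c) * cross x y := by
  simp only [cross, add_coord, smul_coord]; ring

lemma cross_sq (x y : E2) : cross x y ^ 2 = ‖x‖^2 * ‖y‖^2 - ⟪x, y⟫^2 := by
  simp only [cross, nsq_coords, ip_coords]; ring

lemma abs_coord_le_norm (x : E2) (i : Fin 2) : |x i| ≤ ‖x‖ := by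
  have h1 : x i ^ 2 ≤ ‖x‖^2 := by
    rw [nsq_coords]; fin_cases i
    · show x 0 ^ 2 ≤ _; nlinarith [sq_nonneg (x 1)]
    · show x 1 ^ 2 ≤ _; nlinarith [sq_nonneg (x 0)]
  nlinarith [abs_nonneg (x i), norm_nonneg x, sq_abs (x i)]

variable {Λ : Set E2} {b₁ b₂ : E2}

lemma mem_lat (hB : IsZBasis Λ b₁ b₂) {v : E2} :
    v ∈ Λ ↔ ∃ a b : ℤ, v = (a : ℝ) • b₁ + (b : ℝ) • b₂ := by
  rw [hB.2]
  constructor <;> rintro ⟨a, b, rfl⟩ <;> exact ⟨a, b, by push_cast [Int.cast_smul_eq_zsmul]; rfl⟩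

lemma lat_combo (hB : IsZBasis Λ b₁ b₂) {v w : E2} (hv : v ∈ Λ) (hw : w ∈ Λ) (p q : ℤ) :
    (p : ℝ) • v + (q : ℝ) • w ∈ Λ := by
  rw [mem_lat hB] at *
  obtain ⟨a, b, rfl⟩ := hv; obtain ⟨c, d, rfl⟩ := hw
  exact ⟨p * a + q * c, p * b + q * d, by push_cast; module⟩

lemma lat_sub (hB : IsZBasis Λ b₁ b₂) {v w : E2} (hv : v ∈ Λ) (hw : w ∈ Λ) : v - w ∈ Λ := by
  have := lat_combo hB hv hw 1 (-1); push_cast at this; simpa [sub_eq_add_neg] using this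

lemma lat_neg (hB : IsZBasis Λ b₁ b₂) {v : E2} (hv : v ∈ Λ) : -v ∈ Λ := by
  have h0 : (0 : E2) ∈ Λ := by rw [mem_lat hB]; exact ⟨0, 0, by simp⟩
  simpa using lat_sub hB h0 hv

lemma lat_mem_left (hB : IsZBasis Λ b₁ b₂) : b₁ ∈ Λ := (mem_lat hB).2 ⟨1, 0, by simp⟩
lemma lat_mem_right (hB : IsZBasis Λ b₁ b₂) : b₂ ∈ Λ := (mem_lat hB).2 ⟨0, 1, by simp⟩

lemma lat_cross_ne (hB : IsZBasis Λ b₁ b₂) : cross b₁ b₂ ≠ 0 := (cross_ne_iff _ _).1 hB.1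

lemma abs_cross_le (x y : E2) : |cross x y| ≤ ‖x‖ * (|y 0| + |y 1|) := by
  have h : |cross x y| ≤ |x 0| * |y 1| + |x 1| * |y 0| := by
    rw [cross, sub_eq_add_neg]
    refine (abs_add_le _ _).trans ?_
    rw [abs_neg, abs_mul, abs_mul]
  nlinarith [abs_coord_le_norm x 0, abs_coord_le_norm x 1, abs_nonneg (y 0), abs_nonneg (y 1),
    abs_nonneg (x 0), abs_nonneg (x 1)]

/-- finiteness of lattice points in a ball -/
lemma lat_finite (hB : IsZBasis Λ b₁ b₂) (R : ℝ) : {v : E2 | v ∈ Λ ∧ ‖v‖ ≤ R}.Finite := by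
  have hd := lat_cross_ne hB
  have hDpos : (0:ℝ) < |cross b₁ b₂| := abs_pos.2 hd
  set C : ℝ := (R * (|b₁ 0| + |b₁ 1| + |b₂ 0| + |b₂ 1|)) / |cross b₁ b₂| with hC
  have key : ∀ v ∈ {v : E2 | v ∈ Λ ∧ ‖v‖ ≤ R}, ∃ p : ℤ × ℤ,
      p ∈ {p : ℤ × ℤ | |(p.1 : ℝ)| ≤ C ∧ |(p.2 : ℝ)| ≤ C} ∧
        (p.1 : ℝ) • b₁ + (p.2 : ℝ) • b₂ = v := by
    rintro v ⟨hv, hvR⟩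
    obtain ⟨a, b, rfl⟩ := (mem_lat hB).1 hv
    set w := (a:ℝ) • b₁ + (b:ℝ) • b₂ with hw
    have hR0 : 0 ≤ R := (norm_nonneg w).trans hvR
    have hb4 : 0 ≤ |b₁ 0| + |b₁ 1| := by positivity
    have hb5 : 0 ≤ |b₂ 0| + |b₂ 1| := by positivity
    refine ⟨(a, b), ⟨?_, ?_⟩, rfl⟩
    · have h1 : (a : ℝ) * cross b₁ b₂ = cross w b₂ := by
        rw [hw]; simp only [cross, add_coord, smul_coord]; ring

      have h2 : |(a:ℝ)| * |cross b₁ b₂| = |cross w b₂| := by rw [← abs_mul, h1]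
      have h3 : |cross w b₂| ≤ R * (|b₂ 0| + |b₂ 1|) :=
        (abs_cross_le w b₂).trans (by nlinarith)
      rw [hC, le_div_iff₀ hDpos]
      nlinarith
    · have h1 : (b : ℝ) * cross b₁ b₂ = cross b₁ w := by
        rw [hw]; simp only [cross, add_coord, smul_coord]; ring

      have h2 : |(b:ℝ)| * |cross b₁ b₂| = |cross b₁ w| := by rw [← abs_mul, h1]
      have h3 : |cross b₁ w| ≤ ‖b₁‖ * (|w 0| + |w 1|) := abs_cross_le b₁ w
      have h4 : |cross b₁ w| = |cross w b₁| := by rw [cross, cross, ← abs_neg]; ring_nf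
      have h5 : |cross w b₁| ≤ R * (|b₁ 0| + |b₁ 1|) :=
        (abs_cross_le w b₁).trans (by nlinarith)
      rw [hC, le_div_iff₀ hDpos]
      nlinarith
  have hT : {p : ℤ × ℤ | |(p.1 : ℝ)| ≤ C ∧ |(p.2 : ℝ)| ≤ C}.Finite := by
    apply Set.Finite.subset ((Set.finite_Icc (-⌈C⌉) ⌈C⌉).prod (Set.finite_Icc (-⌈C⌉) ⌈C⌉))
    rintro ⟨p, q⟩ ⟨h1, h2⟩
    have l1 := (abs_le.1 h1).1; have l2 := (abs_le.1 h1).2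
    have l3 := (abs_le.1 h2).1; have l4 := (abs_le.1 h2).2
    have hc := Int.le_ceil C
    refine ⟨⟨?_, ?_⟩, ?_, ?_⟩
    · exact_mod_cast (show ((-⌈C⌉:ℤ):ℝ) ≤ ((p,q).1 : ℝ) by push_cast; linarith)
    · exact_mod_cast l2.trans hc
    · exact_mod_cast (show ((-⌈C⌉:ℤ):ℝ) ≤ ((p,q).2 : ℝ) by push_cast; linarith)
    · exact_mod_cast l4.trans hc
  apply Set.Finite.subset (hT.image (fun p : ℤ × ℤ => (p.1 : ℝ) • b₁ + (p.2 : ℝ) • b₂))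
  intro v hv
  obtain ⟨p, hp, hpv⟩ := key v hv
  exact ⟨p, hp, hpv⟩



variable {Λ : Set E2} {b₁ b₂ : E2}

lemma lat_nonzero_left (hB : IsZBasis Λ b₁ b₂) : b₁ ≠ 0 := by
  intro h
  exact (cross_ne_iff b₁ b₂).1 hB.1 (by rw [h, cross]; simp [zero_coord])

/-- dependence through a common nonzero vector -/
lemma cross_trans {m x y : E2} (hm : m ≠ 0) (hx : cross m x = 0) (hy : cross m y = 0) :
    cross x y = 0 := by
  have hm' : m 0 ≠ 0 ∨ m 1 ≠ 0 := by
    by_contra h; push_neg at h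
    exact hm (e2ext (by simp [h.1, zero_coord]) (by simp [h.2, zero_coord]))
  rw [cross] at *
  rcases hm' with h | h
  · have := mul_left_cancel₀ h (show m 0 * (x 0 * y 1 - x 1 * y 0) = m 0 * 0 by
      linear_combination x 0 * hy - y 0 * hx)
    linarith [this]
  · have := mul_left_cancel₀ h (show m 1 * (x 0 * y 1 - x 1 * y 0) = m 1 * 0 by
      linear_combination x 1 * hy - y 1 * hx)
    linarith [this]

/-- existence of a shortest nonzero vector -/
lemma exists_min_norm (hB : IsZBasis Λ b₁ b₂) :
    ∃ m : E2, m ∈ Λ ∧ m ≠ 0 ∧ ∀ v ∈ Λ, v ≠ 0 → ‖m‖ ≤ ‖v‖ := by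
  set S := {v : E2 | (v ∈ Λ ∧ ‖v‖ ≤ ‖b₁‖) ∧ v ≠ 0} with hS
  have hfin : S.Finite := (lat_finite hB ‖b₁‖).subset (fun v hv => hv.1)
  have hne : S.Nonempty := ⟨b₁, ⟨lat_mem_left hB, le_refl _⟩, lat_nonzero_left hB⟩
  obtain ⟨m, hmS, hmin⟩ := Set.exists_min_image S (fun v => ‖v‖) hfin hne
  refine ⟨m, hmS.1.1, hmS.2, fun v hv hv0 => ?_⟩
  by_cases hvb : ‖v‖ ≤ ‖b₁‖
  · exact hmin v ⟨⟨hv, hvb⟩, hv0⟩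
  · exact (hmin b₁ ⟨⟨lat_mem_left hB, le_refl _⟩, lat_nonzero_left hB⟩).trans (le_of_not_ge hvb)

/-- existence of a shortest vector independent from m -/
lemma exists_min_norm2 (hB : IsZBasis Λ b₁ b₂) {m : E2} (hm : m ≠ 0) :
    ∃ w : E2, w ∈ Λ ∧ cross m w ≠ 0 ∧ ∀ v ∈ Λ, cross m v ≠ 0 → ‖w‖ ≤ ‖v‖ := by
  have hwit : ∃ c : E2, c ∈ Λ ∧ cross m c ≠ 0 ∧ ‖c‖ ≤ max ‖b₁‖ ‖b₂‖ := by
    by_cases h1 : cross m b₁ ≠ 0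
    · exact ⟨b₁, lat_mem_left hB, h1, le_max_left _ _⟩
    · push_neg at h1
      by_cases h2 : cross m b₂ ≠ 0
      · exact ⟨b₂, lat_mem_right hB, h2, le_max_right _ _⟩
      · push_neg at h2
        exact absurd (cross_trans hm h1 h2) (lat_cross_ne hB)
  obtain ⟨c, hc, hcc, hcn⟩ := hwit
  set S := {v : E2 | (v ∈ Λ ∧ ‖v‖ ≤ max ‖b₁‖ ‖b₂‖) ∧ cross m v ≠ 0} with hS
  have hfin : S.Finite := (lat_finite hB (max ‖b₁‖ ‖b₂‖)).subset (fun v hv => hv.1)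
  have hne : S.Nonempty := ⟨c, ⟨hc, hcn⟩, hcc⟩
  obtain ⟨w, hwS, hmin⟩ := Set.exists_min_image S (fun v => ‖v‖) hfin hne
  refine ⟨w, hwS.1.1, hwS.2, fun v hv hv0 => ?_⟩
  by_cases hvb : ‖v‖ ≤ max ‖b₁‖ ‖b₂‖
  · exact hmin v ⟨⟨hv, hvb⟩, hv0⟩
  · exact (hmin c ⟨⟨hc, hcn⟩, hcc⟩).trans (hcn.trans (le_of_not_ge hvb))

lemma li_single_iff {v : Fin 1 → E2} : LinearIndependent ℝ v ↔ v 0 ≠ 0 := by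
  rw [linearIndependent_unique_iff]; rfl

lemma li_pair {v : Fin 2 → E2} (h : LinearIndependent ℝ v) : LinearIndependent ℝ ![v 0, v 1] := by
  have : ![v 0, v 1] = v := by funext i; fin_cases i <;> rfl
  rw [this]; exact h

/-- value of the first successive minimum -/
lemma succMin_one (hB : IsZBasis Λ b₁ b₂) {m : E2} (hm : m ∈ Λ) (hm0 : m ≠ 0)
    (hmin : ∀ v ∈ Λ, v ≠ 0 → ‖m‖ ≤ ‖v‖) : succMin Λ 1 = ‖m‖ := by
  have hmem : ‖m‖ ∈ {r : ℝ | 0 < r ∧ ∃ v : Fin 1 → E2,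
      (∀ j, v j ∈ Λ ∧ ‖v j‖ ≤ r) ∧ LinearIndependent ℝ v} :=
    ⟨norm_pos_iff.2 hm0, fun _ => m, fun j => ⟨hm, le_refl _⟩, li_single_iff.2 hm0⟩
  rw [succMin]
  apply le_antisymm
  · exact csInf_le ⟨0, fun r hr => le_of_lt hr.1⟩ hmem
  · apply le_csInf ⟨‖m‖, hmem⟩
    rintro r ⟨hr, v, hv, hli⟩
    exact (hmin (v 0) (hv 0).1 (li_single_iff.1 hli)).trans (hv 0).2

/-- value of the second successive minimum -/
lemma succMin_two (hB : IsZBasis Λ b₁ b₂) {m w : E2} (hm : m ∈ Λ) (hm0 : m ≠ 0)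
    (hmin : ∀ v ∈ Λ, v ≠ 0 → ‖m‖ ≤ ‖v‖)
    (hw : w ∈ Λ) (hmw : cross m w ≠ 0) (hmin2 : ∀ v ∈ Λ, cross m v ≠ 0 → ‖w‖ ≤ ‖v‖) :
    succMin Λ 2 = ‖w‖ := by
  have hw0 : w ≠ 0 := fun h => hmw (by rw [h, cross]; simp [zero_coord])
  have hmw' : ‖m‖ ≤ ‖w‖ := hmin w hw hw0
  have hwpos : 0 < ‖w‖ := norm_pos_iff.2 hw0
  have hmem : ‖w‖ ∈ {r : ℝ | 0 < r ∧ ∃ v : Fin 2 → E2,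
      (∀ j, v j ∈ Λ ∧ ‖v j‖ ≤ r) ∧ LinearIndependent ℝ v} := by
    refine ⟨hwpos, ![m, w], fun j => ?_, (cross_ne_iff m w).2 hmw⟩
    fin_cases j
    · exact ⟨hm, hmw'⟩
    · exact ⟨hw, le_refl _⟩
  rw [succMin]
  apply le_antisymm
  · exact csInf_le ⟨0, fun r hr => le_of_lt hr.1⟩ hmem
  · apply le_csInf ⟨‖w‖, hmem⟩
    rintro r ⟨hr, v, hv, hli⟩
    have hcr : cross (v 0) (v 1) ≠ 0 := (cross_ne_iff _ _).1 (li_pair hli)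
    have : cross m (v 0) ≠ 0 ∨ cross m (v 1) ≠ 0 := by
      by_contra h; push_neg at h
      exact hcr (cross_trans hm0 h.1 h.2)
    rcases this with h | h
    · exact (hmin2 (v 0) (hv 0).1 h).trans (hv 0).2
    · exact (hmin2 (v 1) (hv 1).1 h).trans (hv 1).2

lemma key_ineq (A I s t : ℝ) (hA : 0 < A) (hI : 0 ≤ I) (h2 : 2 * I ≤ A)
    (hs2 : s^2 ≤ 1/4) (ht2 : t^2 ≤ 1/4) :
    s^2 * A + 2*(s*t)*I + t^2 * A < A := by
  nlinarith [mul_nonneg (sq_nonneg (s - t)) hI,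
    mul_nonneg (by linarith : (0:ℝ) ≤ 1/2 - s^2 - t^2) (by linarith : (0:ℝ) ≤ A + I)]

lemma cross_neg_right (x y : E2) : cross x (-y) = -cross x y := by
  simp only [cross, neg_coord]; ring

/-- existence of a minimal pair -/
lemma exists_minpair (hB : IsZBasis Λ b₁ b₂) : ∃ p : E2 × E2, IsMinPair Λ p.1 p.2 := by
  obtain ⟨m, hm, hm0, hmin⟩ := exists_min_norm hB
  obtain ⟨w, hw, hmw, hmin2⟩ := exists_min_norm2 hB hm0
  have h1 := succMin_one hB hm hm0 hmin
  have h2 := succMin_two hB hm hm0 hmin hw hmw hmin2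
  by_cases hangle : angle m w ≤ π / 2
  · exact ⟨(m, w), hm, hw, (cross_ne_iff m w).2 hmw, h1.symm, h2.symm, hangle⟩
  · have hmw' : cross m (-w) ≠ 0 := by rw [cross_neg_right]; exact neg_ne_zero.2 hmw
    have hmin2' : ∀ v ∈ Λ, cross m v ≠ 0 → ‖(-w : E2)‖ ≤ ‖v‖ := by
      intro v hv hc; rw [norm_neg]; exact hmin2 v hv hc
    have h2' := succMin_two hB hm hm0 hmin (lat_neg hB hw) hmw' hmin2'
    refine ⟨(m, -w), hm, lat_neg hB hw, (cross_ne_iff m (-w)).2 hmw', h1.symm, h2'.symm, ?_⟩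
    have := angle_neg_right m w
    have := angle_le_pi m w
    simp only [this]
    rw [angle_neg_right]
    linarith [le_of_not_ge hangle]

local notation "K" => cross

/-- main structural facts about a minimal pair of a well-rounded lattice -/
lemma minpair_facts (hB : IsZBasis Λ b₁ b₂) (hWR : succMin Λ 1 = succMin Λ 2)
    {y₁ y₂ : E2} (hP : IsMinPair Λ y₁ y₂) :
    0 < ‖y₁‖ ∧ ‖y₂‖ = ‖y₁‖ ∧ 0 ≤ ⟪y₁, y₂⟫ ∧ 2 * ⟪y₁, y₂⟫ ≤ ‖y₁‖^2 ∧
      IsZBasis Λ y₁ y₂ ∧ detB b₁ b₂ = detB y₁ y₂ := by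
  obtain ⟨hy₁Λ, hy₂Λ, hli, hn₁, hn₂, hang⟩ := hP
  obtain ⟨m, hm, hm0, hmin⟩ := exists_min_norm hB
  have h1 : succMin Λ 1 = ‖m‖ := succMin_one hB hm hm0 hmin
  have hcr : cross y₁ y₂ ≠ 0 := (cross_ne_iff y₁ y₂).1 hli
  have hy₁0 : y₁ ≠ 0 := by
    intro h; exact hcr (by rw [h, cross]; simp [zero_coord])
  have hy₂0 : y₂ ≠ 0 := by
    intro h; exact hcr (by rw [h, cross]; simp [zero_coord])
  have hpos : 0 < ‖y₁‖ := norm_pos_iff.2 hy₁0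
  have heq : ‖y₂‖ = ‖y₁‖ := by rw [hn₂, ← hWR, ← hn₁]
  have lower : ∀ v ∈ Λ, v ≠ 0 → ‖y₁‖ ≤ ‖v‖ := by
    intro v hv hv0; rw [hn₁, h1]; exact hmin v hv hv0
  -- inner product bounds
  have hnn : ‖y₁‖ * ‖y₂‖ ≠ 0 := ne_of_gt (mul_pos hpos (norm_pos_iff.2 hy₂0))
  have hip : ⟪y₁, y₂⟫ = Real.cos (angle y₁ y₂) * (‖y₁‖ * ‖y₂‖) := by
    rw [cos_angle, div_mul_cancel₀ _ hnn]
  have hcos : 0 ≤ Real.cos (angle y₁ y₂) :=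
    Real.cos_nonneg_of_mem_Icc ⟨by linarith [angle_nonneg y₁ y₂, Real.pi_pos], hang⟩
  have hinn : 0 ≤ ⟪y₁, y₂⟫ := by
    rw [hip]; exact mul_nonneg hcos (by positivity)
  have hsub0 : y₁ - y₂ ≠ 0 := by
    intro h
    have : y₁ = y₂ := by rwa [sub_eq_zero] at h
    exact hcr (by rw [this, cross]; ring)
  have hsubΛ : y₁ - y₂ ∈ Λ := lat_sub hB hy₁Λ hy₂Λ
  have hsub : ‖y₁‖ ≤ ‖y₁ - y₂‖ := lower _ hsubΛ hsub0
  have hsubsq : ‖y₁‖^2 ≤ ‖y₁ - y₂‖^2 := pow_le_pow_left₀ (norm_nonneg _) hsub 2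
  have hexp : ‖y₁ - y₂‖^2 = ‖y₁‖^2 - 2 * ⟪y₁, y₂⟫ + ‖y₂‖^2 := norm_sub_sq_real y₁ y₂
  have hinn2 : 2 * ⟪y₁, y₂⟫ ≤ ‖y₁‖^2 := by rw [heq] at hexp; linarith
  -- spanning
  have hspan : ∀ v ∈ Λ, ∃ a b : ℤ, v = (a:ℝ) • y₁ + (b:ℝ) • y₂ := by
    intro v hv
    set s : ℝ := cross v y₂ / cross y₁ y₂ with hs
    set t : ℝ := cross y₁ v / cross y₁ y₂ with ht
    have k0 : cross v y₂ * y₁ 0 + cross y₁ v * y₂ 0 = v 0 * cross y₁ y₂ := by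
      simp only [cross]; ring
    have k1 : cross v y₂ * y₁ 1 + cross y₁ v * y₂ 1 = v 1 * cross y₁ y₂ := by
      simp only [cross]; ring
    have hvst : v = s • y₁ + t • y₂ := by
      apply e2ext
      · rw [add_coord, smul_coord, smul_coord, hs, ht, div_mul_eq_mul_div, div_mul_eq_mul_div,
          ← add_div, k0, mul_div_cancel_right₀ _ hcr]
      · rw [add_coord, smul_coord, smul_coord, hs, ht, div_mul_eq_mul_div, div_mul_eq_mul_div,
          ← add_div, k1, mul_div_cancel_right₀ _ hcr]
    set s' : ℝ := s - round s with hs'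
    set t' : ℝ := t - round t with ht'
    have hws : |s'| ≤ 1/2 := abs_sub_round s
    have hwt : |t'| ≤ 1/2 := abs_sub_round t
    have hs2 : s'^2 ≤ 1/4 := by
      rw [← sq_abs]
      nlinarith [mul_le_mul hws hws (abs_nonneg s') (by norm_num : (0:ℝ) ≤ 1/2)]
    have ht2 : t'^2 ≤ 1/4 := by
      rw [← sq_abs]
      nlinarith [mul_le_mul hwt hwt (abs_nonneg t') (by norm_num : (0:ℝ) ≤ 1/2)]
    set w' : E2 := s' • y₁ + t' • y₂ with hw'
    have hwΛ : w' ∈ Λ := by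
      have h := lat_combo hB hy₁Λ hy₂Λ (-(round s)) (-(round t))
      have h2 := lat_sub hB hv (lat_combo hB hy₁Λ hy₂Λ (round s) (round t))
      have : v - ((round s : ℝ) • y₁ + (round t : ℝ) • y₂) = w' := by
        rw [hw', hvst, hs', ht']; module
      rwa [this] at h2
    have hnw : ‖w'‖^2 = s'^2 * ‖y₁‖^2 + 2*(s'*t')*⟪y₁,y₂⟫ + t'^2 * ‖y₂‖^2 := by
      rw [hw']
      simp only [nsq_coords, add_coord, smul_coord, ip_coords]
      ring
    have hwlt : ‖w'‖^2 < ‖y₁‖^2 := by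
      rw [hnw, heq]
      exact key_ineq _ _ _ _ (pow_pos hpos 2) hinn hinn2 hs2 ht2
    have hw0 : w' = 0 := by
      by_contra h
      have := lower w' hwΛ h
      nlinarith [pow_le_pow_left₀ (norm_nonneg y₁) this 2]
    have hst0 : s' = 0 ∧ t' = 0 := by
      have e0 : s' * y₁ 0 + t' * y₂ 0 = 0 := by
        have h := congrArg (fun z : E2 => z 0) hw0
        simpa only [hw', add_coord, smul_coord, zero_coord] using h
      have e1 : s' * y₁ 1 + t' * y₂ 1 = 0 := by
        have h := congrArg (fun z : E2 => z 1) hw0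
        simpa only [hw', add_coord, smul_coord, zero_coord] using h
      constructor
      · have : s' * cross y₁ y₂ = 0 := by rw [cross]; linear_combination y₂ 1 * e0 - y₂ 0 * e1
        exact (mul_eq_zero.1 this).resolve_right hcr
      · have : t' * cross y₁ y₂ = 0 := by rw [cross]; linear_combination y₁ 0 * e1 - y₁ 1 * e0
        exact (mul_eq_zero.1 this).resolve_right hcr
    refine ⟨round s, round t, ?_⟩
    rw [hvst]
    have e1 : s = round s := by have := hst0.1; rw [hs'] at this; linarith
    have e2 : t = round t := by have := hst0.2; rw [ht'] at this; linarith
    rw [← e1, ← e2]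
  have hYB : IsZBasis Λ y₁ y₂ := by
    refine ⟨hli, Set.ext fun v => ⟨fun hv => ?_, ?_⟩⟩
    · obtain ⟨a, b, hab⟩ := hspan v hv
      exact ⟨a, b, by rw [hab]; push_cast [Int.cast_smul_eq_zsmul]; rfl⟩
    · rintro ⟨a, b, rfl⟩
      have := lat_combo hB hy₁Λ hy₂Λ a b
      -- need a • y₁ + b • y₂ (zsmul) ∈ Λ
      have hz : (a:ℝ) • y₁ + (b:ℝ) • y₂ = a • y₁ + b • y₂ := by
        push_cast [Int.cast_smul_eq_zsmul]; rfl
      rw [← hz]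
      exact lat_combo hB hy₁Λ hy₂Λ a b
  -- determinant equality
  have hdet : detB b₁ b₂ = detB y₁ y₂ := by
    obtain ⟨a1, b1', hy1e⟩ : ∃ a b : ℤ, y₁ = (a:ℝ) • b₁ + (b:ℝ) • b₂ := (mem_lat hB).1 hy₁Λ
    obtain ⟨a2, b2', hy2e⟩ : ∃ a b : ℤ, y₂ = (a:ℝ) • b₁ + (b:ℝ) • b₂ := (mem_lat hB).1 hy₂Λ
    obtain ⟨c1, d1, hb1e⟩ : ∃ a b : ℤ, b₁ = (a:ℝ) • y₁ + (b:ℝ) • y₂ :=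
      (mem_lat hYB).1 (lat_mem_left hB)
    obtain ⟨c2, d2, hb2e⟩ : ∃ a b : ℤ, b₂ = (a:ℝ) • y₁ + (b:ℝ) • y₂ :=
      (mem_lat hYB).1 (lat_mem_right hB)
    have e1 : cross y₁ y₂ = ((a1 * b2' - b1' * a2 : ℤ) : ℝ) * cross b₁ b₂ := by
      rw [hy1e, hy2e, cross_combo]; push_cast; ring
    have e2 : cross b₁ b₂ = ((c1 * d2 - d1 * c2 : ℤ) : ℝ) * cross y₁ y₂ := by
      rw [hb1e, hb2e, cross_combo]; push_cast; ring
    have hbb : cross b₁ b₂ ≠ 0 := lat_cross_ne hB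
    have e3 : ((c1 * d2 - d1 * c2 : ℤ) : ℝ) * ((a1 * b2' - b1' * a2 : ℤ) : ℝ) = 1 := by
      have h' : cross b₁ b₂ = ((c1 * d2 - d1 * c2 : ℤ) : ℝ) *
          (((a1 * b2' - b1' * a2 : ℤ) : ℝ) * cross b₁ b₂) := by rw [← e1]; exact e2
      exact mul_right_cancel₀ hbb (by push_cast at h' ⊢; linear_combination -h')
    have e4 : (c1 * d2 - d1 * c2) * (a1 * b2' - b1' * a2) = 1 := by exact_mod_cast e3
    have e5 : |((a1 * b2' - b1' * a2 : ℤ) : ℝ)| = 1 := by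
      rcases Int.isUnit_iff.1 (IsUnit.of_mul_eq_one (a := a1 * b2' - b1' * a2) (c1 * d2 - d1 * c2)
        (by linarith [e4])) with h | h <;> rw [h] <;> norm_num
    have habs : |cross y₁ y₂| = |cross b₁ b₂| := by
      rw [e1, abs_mul, e5, one_mul]
    simp only [detB, cross] at habs ⊢
    exact habs.symm
  exact ⟨hpos, heq, hinn, hinn2, hYB, hdet⟩

lemma nsq_combo (x y : E2) (a b : ℝ) :
    ‖a • x + b • y‖^2 = a^2 * ‖x‖^2 + 2*(a*b)*⟪x,y⟫ + b^2 * ‖y‖^2 := by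
  simp only [nsq_coords, ip_coords, add_coord, smul_coord]; ring

lemma ip_combo (x y : E2) (a b c d : ℝ) :
    ⟪a • x + b • y, c • x + d • y⟫ =
      a*c*‖x‖^2 + (a*d + b*c)*⟪x,y⟫ + b*d*‖y‖^2 := by
  simp only [nsq_coords, ip_coords, add_coord, smul_coord]; ring

lemma theta_eq_pi_div_three {θ : ℝ} (h0 : 0 ≤ θ) (h1 : θ ≤ π) (h : Real.cos θ = 1/2) :
    θ = π/3 := by
  rw [← Real.arccos_cos h0 h1, h, ← Real.cos_pi_div_three,
    Real.arccos_cos (by positivity) (by linarith [Real.pi_pos])]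

lemma detB_val {y₁ y₂ : E2} (hpos : 0 < ‖y₁‖) (hpos2 : 0 < ‖y₂‖) :
    detB y₁ y₂ = ‖y₁‖ * ‖y₂‖ * Real.sin (angle y₁ y₂) := by
  have hnn : ‖y₁‖ * ‖y₂‖ ≠ 0 := ne_of_gt (mul_pos hpos hpos2)
  have hcos : ⟪y₁,y₂⟫ = Real.cos (angle y₁ y₂) * (‖y₁‖ * ‖y₂‖) := by
    rw [cos_angle, div_mul_cancel₀ _ hnn]
  have hsinn : 0 ≤ Real.sin (angle y₁ y₂) :=
    Real.sin_nonneg_of_nonneg_of_le_pi (angle_nonneg y₁ y₂) (angle_le_pi y₁ y₂)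
  have hc2 := Real.sin_sq_add_cos_sq (angle y₁ y₂)
  have hcr := cross_sq y₁ y₂
  have h2 : (detB y₁ y₂)^2 = (‖y₁‖ * ‖y₂‖ * Real.sin (angle y₁ y₂))^2 := by
    have : detB y₁ y₂ = |cross y₁ y₂| := rfl
    rw [this, sq_abs, hcr, hcos]
    linear_combination (-(‖y₁‖ * ‖y₂‖)^2) * hc2
  have hd0 : 0 ≤ detB y₁ y₂ := abs_nonneg _
  have hr0 : 0 ≤ ‖y₁‖ * ‖y₂‖ * Real.sin (angle y₁ y₂) := by positivity
  nlinarith [h2, hd0, hr0]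

lemma sqrt_three_pos : (0:ℝ) < Real.sqrt 3 := Real.sqrt_pos.2 (by norm_num)

lemma sqrt_three_sq : Real.sqrt 3 ^ 2 = 3 := Real.sq_sqrt (by norm_num)

lemma sqrt_three_quarters : Real.sqrt (3/4) = Real.sqrt 3 / 2 := by
  rw [show (3:ℝ)/4 = (Real.sqrt 3 / 2)^2 by
    rw [div_pow, Real.sq_sqrt (by norm_num : (0:ℝ) ≤ 3)]; norm_num,
    Real.sqrt_sq (by positivity)]

/-- angle bounds for a well-rounded minimal pair -/
lemma angle_bounds {θ A I : ℝ} (hA : 0 < A) (hI0 : 0 ≤ I) (hI : 2 * I ≤ A)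
    (h0 : 0 ≤ θ) (hpi2 : θ ≤ π/2) (hcos : Real.cos θ = I / A) :
    π/3 ≤ θ ∧ Real.sqrt 3 / 2 ≤ Real.sin θ ∧ Real.sin θ > 0 := by
  have hcos0 : 0 ≤ Real.cos θ := by rw [hcos]; positivity
  have hcos2 : Real.cos θ ≤ 1/2 := by
    rw [hcos, div_le_iff₀ hA]; linarith
  have hθ3 : π/3 ≤ θ := by
    by_contra h
    push_neg at h
    have := Real.cos_lt_cos_of_nonneg_of_le_pi h0 (by linarith [Real.pi_pos]) h
    rw [Real.cos_pi_div_three] at this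
    linarith
  have hsin : Real.sin θ = Real.sqrt (1 - Real.cos θ^2) :=
    Real.sin_eq_sqrt_one_sub_cos_sq h0 (by linarith [Real.pi_pos])
  have hsin2 : Real.sqrt 3 / 2 ≤ Real.sin θ := by
    rw [hsin, ← sqrt_three_quarters]
    apply Real.sqrt_le_sqrt
    nlinarith
  exact ⟨hθ3, hsin2, by nlinarith [sqrt_three_pos]⟩

lemma inner_nonneg_of_angle {x y : E2} (hx : x ≠ 0) (hy : y ≠ 0) (h : angle x y ≤ π/2) :
    0 ≤ ⟪x,y⟫ := by
  have hnn : ‖x‖ * ‖y‖ ≠ 0 := ne_of_gt (mul_pos (norm_pos_iff.2 hx) (norm_pos_iff.2 hy))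
  have hip : ⟪x,y⟫ = Real.cos (angle x y) * (‖x‖ * ‖y‖) := by
    rw [cos_angle, div_mul_cancel₀ _ hnn]
  have hcos : 0 ≤ Real.cos (angle x y) :=
    Real.cos_nonneg_of_mem_Icc ⟨by linarith [angle_nonneg x y, Real.pi_pos], h⟩
  rw [hip]
  exact mul_nonneg hcos (by positivity)

lemma int_norm_ge {a b : ℤ} (h : ¬(a = 0 ∧ b = 0)) : 1 ≤ a^2 + a*b + b^2 := by
  have hpos : 0 < a^2 + a*b + b^2 := by
    rcases (not_and_or.1 h) with ha | hb
    · have h1 : 1 ≤ |a| := Int.one_le_abs ha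
      nlinarith [sq_nonneg (a + 2*b), sq_abs a, abs_nonneg a]
    · have h1 : 1 ≤ |b| := Int.one_le_abs hb
      nlinarith [sq_nonneg (b + 2*a), sq_abs b, abs_nonneg b]
  linarith

lemma int_bounds {a b : ℤ} (h : a^2 + a*b + b^2 = 1) : |a| ≤ 1 ∧ |b| ≤ 1 := by
  constructor
  · by_contra h'
    push_neg at h'
    have h2 : 2 ≤ |a| := h'
    nlinarith [sq_abs a, sq_nonneg (a + 2*b), abs_nonneg a]
  · by_contra h'
    push_neg at h'
    have h2 : 2 ≤ |b| := h'
    nlinarith [sq_abs b, sq_nonneg (b + 2*a), abs_nonneg b]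

/-- A lattice with a hexagonal basis has angle π/3 and both minima `r`. -/
lemma latAngle_of_hex_basis {z₁ z₂ : E2} (hB' : IsZBasis Λ z₁ z₂) {r : ℝ} (hr : 0 < r)
    (h1 : ‖z₁‖^2 = r^2) (h2 : ‖z₂‖^2 = r^2) (h3 : ⟪z₁,z₂⟫ = r^2/2) :
    latAngle Λ = π/3 := by
  have hn1 : ‖z₁‖ = r := by rw [← Real.sqrt_sq (norm_nonneg z₁), h1, Real.sqrt_sq hr.le]
  have hn2 : ‖z₂‖ = r := by rw [← Real.sqrt_sq (norm_nonneg z₂), h2, Real.sqrt_sq hr.le]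
  have hz10 : z₁ ≠ 0 := by intro h; rw [h, norm_zero] at hn1; exact hr.ne hn1
  have hcr2 : cross z₁ z₂ ^ 2 = 3/4*r^4 := by rw [cross_sq, h1, h2, h3]; ring
  have hcr : cross z₁ z₂ ≠ 0 := by
    intro h; rw [h] at hcr2; nlinarith [pow_pos hr 4]
  have hnormsq : ∀ (a b : ℤ), ‖(a:ℝ) • z₁ + (b:ℝ) • z₂‖^2 = r^2 * ((a^2+a*b+b^2 : ℤ) : ℝ) := by
    intro a b; rw [nsq_combo, h1, h2, h3]; push_cast; ring
  have lower : ∀ v ∈ Λ, v ≠ 0 → r ≤ ‖v‖ := by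
    intro v hv hv0
    obtain ⟨a, b, rfl⟩ := (mem_lat hB').1 hv
    have hab : ¬(a = 0 ∧ b = 0) := by
      rintro ⟨rfl, rfl⟩
      exact hv0 (by push_cast; module)
    have h4 : (1:ℝ) ≤ ((a^2+a*b+b^2 : ℤ):ℝ) := by exact_mod_cast int_norm_ge hab
    have h5 : r^2 ≤ ‖(a:ℝ) • z₁ + (b:ℝ) • z₂‖^2 := by
      rw [hnormsq]; nlinarith [pow_pos hr 2]
    nlinarith [norm_nonneg ((a:ℝ) • z₁ + (b:ℝ) • z₂)]
  have hmin1 : ∀ v ∈ Λ, v ≠ 0 → ‖z₁‖ ≤ ‖v‖ := fun v hv h0 => by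
    rw [hn1]; exact lower v hv h0
  have hs1 : succMin Λ 1 = r := by
    rw [succMin_one hB' (lat_mem_left hB') hz10 hmin1, hn1]
  have hmin2 : ∀ v ∈ Λ, cross z₁ v ≠ 0 → ‖z₂‖ ≤ ‖v‖ := by
    intro v hv hc
    have hv0 : v ≠ 0 := by
      intro h; rw [h] at hc; exact hc (by rw [cross]; simp [zero_coord])
    rw [hn2]; exact lower v hv hv0
  have hs2 : succMin Λ 2 = r := by
    rw [succMin_two hB' (lat_mem_left hB') hz10 hmin1 (lat_mem_right hB') hcr hmin2, hn2]
  have hex : ∃ p : E2 × E2, IsMinPair Λ p.1 p.2 := exists_minpair hB'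
  rw [latAngle, dif_pos hex]
  obtain ⟨hp1, hp2, hli, hnp1, hnp2, hang⟩ := hex.choose_spec
  set p₁ := hex.choose.1 with hp₁
  set p₂ := hex.choose.2 with hp₂
  have hp1r : ‖p₁‖ = r := by rw [hnp1, hs1]
  have hp2r : ‖p₂‖ = r := by rw [hnp2, hs2]
  have hp10 : p₁ ≠ 0 := by intro h; rw [h, norm_zero] at hp1r; exact hr.ne hp1r
  have hp20 : p₂ ≠ 0 := by intro h; rw [h, norm_zero] at hp2r; exact hr.ne hp2r
  obtain ⟨A1, B1, hp1e⟩ := (mem_lat hB').1 hp1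
  obtain ⟨A2, B2, hp2e⟩ := (mem_lat hB').1 hp2
  have e1 : A1^2 + A1*B1 + B1^2 = 1 := by
    have h' : r^2 * ((A1^2+A1*B1+B1^2:ℤ):ℝ) = r^2 * 1 := by
      rw [mul_one, ← hnormsq, ← hp1e, hp1r]
    have := mul_left_cancel₀ (pow_ne_zero 2 hr.ne') h'
    exact_mod_cast this
  have e2 : A2^2 + A2*B2 + B2^2 = 1 := by
    have h' : r^2 * ((A2^2+A2*B2+B2^2:ℤ):ℝ) = r^2 * 1 := by
      rw [mul_one, ← hnormsq, ← hp2e, hp2r]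
    have := mul_left_cancel₀ (pow_ne_zero 2 hr.ne') h'
    exact_mod_cast this
  have hip : ⟪p₁, p₂⟫ = r^2 * ((2*A1*A2 + A1*B2 + A2*B1 + 2*B1*B2 : ℤ):ℝ)/2 := by
    rw [hp1e, hp2e, ip_combo, h1, h2, h3]; push_cast; ring
  have hI0 : 0 ≤ ⟪p₁, p₂⟫ := inner_nonneg_of_angle hp10 hp20 hang
  have hE0 : (0:ℤ) ≤ 2*A1*A2 + A1*B2 + A2*B1 + 2*B1*B2 := by
    have : (0:ℝ) ≤ ((2*A1*A2 + A1*B2 + A2*B1 + 2*B1*B2 : ℤ):ℝ) := by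
      by_contra hneg
      push_neg at hneg
      rw [hip] at hI0
      nlinarith [pow_pos hr 2]
    exact_mod_cast this
  have hcri : A1*B2 - B1*A2 ≠ 0 := by
    have hc := (cross_ne_iff p₁ p₂).1 hli
    have hrel : cross p₁ p₂ = ((A1*B2 - B1*A2 : ℤ):ℝ) * cross z₁ z₂ := by
      rw [hp1e, hp2e, cross_combo]; push_cast; ring
    intro h0
    exact hc (by rw [hrel, show ((A1*B2 - B1*A2 : ℤ):ℝ) = 0 by exact_mod_cast h0, zero_mul])
  have hE : (2*A1*A2 + A1*B2 + A2*B1 + 2*B1*B2 : ℤ) = 1 := by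
    obtain ⟨ha1, hb1⟩ := int_bounds e1
    obtain ⟨ha2, hb2⟩ := int_bounds e2
    rw [abs_le] at ha1 hb1 ha2 hb2
    obtain ⟨ha1l, ha1r⟩ := ha1; obtain ⟨hb1l, hb1r⟩ := hb1
    obtain ⟨ha2l, ha2r⟩ := ha2; obtain ⟨hb2l, hb2r⟩ := hb2
    interval_cases A1 <;> interval_cases B1 <;> interval_cases A2 <;> interval_cases B2 <;>
      omega
  have hcos : Real.cos (angle p₁ p₂) = 1/2 := by
    rw [cos_angle, hip, hE, hp1r, hp2r]
    push_cast
    field_simp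
  exact theta_eq_pi_div_three (angle_nonneg p₁ p₂) (angle_le_pi p₁ p₂) hcos

def hv₁ : E2 := (WithLp.equiv 2 (Fin 2 → ℝ)).symm ![1, 0]
def hv₂ : E2 := (WithLp.equiv 2 (Fin 2 → ℝ)).symm ![1/2, Real.sqrt 3/2]

lemma hv₁_0 : hv₁ 0 = 1 := rfl
lemma hv₁_1 : hv₁ 1 = 0 := rfl
lemma hv₂_0 : hv₂ 0 = 1/2 := rfl
lemma hv₂_1 : hv₂ 1 = Real.sqrt 3 / 2 := rfl

lemma hex_eq : hexLattice = {v : E2 | ∃ a b : ℤ, v = a • hv₁ + b • hv₂} := rfl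

lemma nh1 : ‖hv₁‖^2 = 1 := by rw [nsq_coords, hv₁_0, hv₁_1]; norm_num
lemma nh2 : ‖hv₂‖^2 = 1 := by
  rw [nsq_coords, hv₂_0, hv₂_1, div_pow, div_pow, sqrt_three_sq]; norm_num
lemma ih12 : ⟪hv₁, hv₂⟫ = 1/2 := by rw [ip_coords, hv₁_0, hv₁_1, hv₂_0]; ring

lemma hex_cross : cross hv₁ hv₂ = Real.sqrt 3 / 2 := by
  rw [cross, hv₁_0, hv₁_1, hv₂_0, hv₂_1]; ring

lemma hexZB : IsZBasis hexLattice hv₁ hv₂ :=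
  ⟨(cross_ne_iff _ _).2 (by rw [hex_cross]; positivity), rfl⟩

lemma tel_coord (U : Matrix (Fin 2) (Fin 2) ℝ) (v : E2) (i : Fin 2) :
    (Matrix.toEuclideanLin U v) i = U i 0 * v 0 + U i 1 * v 1 := by
  rw [Matrix.toEuclideanLin_apply]
  show Matrix.mulVec U _ i = _
  simp [Matrix.mulVec, dotProduct, Fin.sum_univ_two]

lemma orth_eqs {U : Matrix (Fin 2) (Fin 2) ℝ} (hU : U.transpose * U = 1) :
    U 0 0 * U 0 0 + U 1 0 * U 1 0 = 1 ∧ U 0 0 * U 0 1 + U 1 0 * U 1 1 = 0 ∧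
      U 0 1 * U 0 1 + U 1 1 * U 1 1 = 1 := by
  have h00 := congrFun (congrFun hU 0) 0
  have h01 := congrFun (congrFun hU 0) 1
  have h11 := congrFun (congrFun hU 1) 1
  simp [Matrix.mul_apply, Matrix.transpose_apply, Fin.sum_univ_two, Matrix.one_apply]
    at h00 h01 h11
  exact ⟨h00, h01, h11⟩

lemma sim_inner {U : Matrix (Fin 2) (Fin 2) ℝ} (hU : U.transpose * U = 1) (α : ℝ) (v w : E2) :
    ⟪α • Matrix.toEuclideanLin U v, α • Matrix.toEuclideanLin U w⟫ = α^2 * ⟪v, w⟫ := by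
  obtain ⟨q1, q2, q3⟩ := orth_eqs hU
  rw [ip_coords, ip_coords]
  simp only [smul_coord, tel_coord]
  linear_combination (α^2 * (v 0 * w 0)) * q1 + (α^2 * (v 0 * w 1 + v 1 * w 0)) * q2 +
    (α^2 * (v 1 * w 1)) * q3

lemma div_helper (Kd x y u v w : ℝ) (hKd : Kd ≠ 0) (h : x*u + y*v = w*Kd) :
    x/Kd*u + y/Kd*v = w := by
  field_simp
  linear_combination h

/-- forward: a lattice with a hexagonal minimal basis is similar to the hexagonal lattice -/
lemma similar_of_hex_basis {q₁ q₂ : E2} (hYB : IsZBasis Λ q₁ q₂) {m : ℝ} (hm : 0 < m)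
    (h1 : ‖q₁‖^2 = m^2) (h2 : ‖q₂‖^2 = m^2) (h3 : ⟪q₁,q₂⟫ = m^2/2) :
    LatSimilar Λ hexLattice := by
  have ha : q₁ 0^2 + q₁ 1^2 = m^2 := by rw [← nsq_coords]; exact h1
  have hcc : q₂ 0^2 + q₂ 1^2 = m^2 := by rw [← nsq_coords]; exact h2
  have hip' : q₁ 0 * q₂ 0 + q₁ 1 * q₂ 1 = m^2/2 := by rw [← ip_coords]; exact h3
  set a := q₁ 0 with hqa; set b := q₁ 1 with hqb; set c := q₂ 0 with hqc; set d := q₂ 1 with hqd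
  set K' : ℝ := a*d - b*c with hK
  have hK2 : K'^2 = 3/4*m^4 := by
    have h' : K'^2 = (a^2+b^2)*(c^2+d^2) - (a*c+b*d)^2 := by rw [hK]; ring
    rw [h', ha, hcc, hip']; ring
  have hKne : K' ≠ 0 := by intro h; rw [h] at hK2; nlinarith [pow_pos hm 4]
  set s3 := Real.sqrt 3 with hs3def
  have hs3 : s3^2 = 3 := sqrt_three_sq
  set U : Matrix (Fin 2) (Fin 2) ℝ :=
    !![(m*d - m/2*b)/K', (m/2*a - m*c)/K'; (-(m*s3/2)*b)/K', (m*s3/2*a)/K'] with hUdef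
  have hU00 : U 0 0 = (m*d - m/2*b)/K' := rfl
  have hU01 : U 0 1 = (m/2*a - m*c)/K' := rfl
  have hU10 : U 1 0 = (-(m*s3/2)*b)/K' := rfl
  have hU11 : U 1 1 = (m*s3/2*a)/K' := rfl
  have div_entry : ∀ x y : ℝ, x/K' * (y/K') = x*y/(K'*K') := by
    intro x y; rw [div_mul_div_comm]
  have e00 : (U * U.transpose) 0 0 = 1 := by
    simp only [Matrix.mul_apply, Matrix.transpose_apply, Fin.sum_univ_two, hU00, hU01]
    rw [div_entry, div_entry, ← add_div,
      show (m*d - m/2*b)*(m*d - m/2*b) + (m/2*a - m*c)*(m/2*a - m*c) = K'*K' by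
        linear_combination (m^2/4) * ha + m^2 * hcc - m^2 * hip' - hK2,
      div_self (mul_ne_zero hKne hKne)]
  have e01 : (U * U.transpose) 0 1 = 0 := by
    simp only [Matrix.mul_apply, Matrix.transpose_apply, Fin.sum_univ_two, hU00, hU01, hU10, hU11]
    rw [div_entry, div_entry, ← add_div,
      show (m*d - m/2*b)*(-(m*s3/2)*b) + (m/2*a - m*c)*(m*s3/2*a) = 0 by
        linear_combination (m^2*s3/4) * ha - (m^2*s3/2) * hip',
      zero_div]
  have e10 : (U * U.transpose) 1 0 = 0 := by
    simp only [Matrix.mul_apply, Matrix.transpose_apply, Fin.sum_univ_two, hU00, hU01, hU10, hU11]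
    rw [div_entry, div_entry, ← add_div,
      show (-(m*s3/2)*b)*(m*d - m/2*b) + (m*s3/2*a)*(m/2*a - m*c) = 0 by
        linear_combination (m^2*s3/4) * ha - (m^2*s3/2) * hip',
      zero_div]
  have e11 : (U * U.transpose) 1 1 = 1 := by
    simp only [Matrix.mul_apply, Matrix.transpose_apply, Fin.sum_univ_two, hU10, hU11]
    rw [div_entry, div_entry, ← add_div,
      show (-(m*s3/2)*b)*(-(m*s3/2)*b) + (m*s3/2*a)*(m*s3/2*a) = K'*K' by
        linear_combination (m^2*s3^2/4) * ha + (m^4/4) * hs3 - hK2,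
      div_self (mul_ne_zero hKne hKne)]
  have hUUt : U * U.transpose = 1 := by
    ext i j
    fin_cases i <;> fin_cases j
    · show (U * U.transpose) 0 0 = (1 : Matrix (Fin 2) (Fin 2) ℝ) 0 0
      simp only [e00, Matrix.one_apply]; norm_num
    · show (U * U.transpose) 0 1 = (1 : Matrix (Fin 2) (Fin 2) ℝ) 0 1
      simp only [e01, Matrix.one_apply]; norm_num
    · show (U * U.transpose) 1 0 = (1 : Matrix (Fin 2) (Fin 2) ℝ) 1 0
      simp only [e10, Matrix.one_apply]; norm_num
    · show (U * U.transpose) 1 1 = (1 : Matrix (Fin 2) (Fin 2) ℝ) 1 1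
      simp only [e11, Matrix.one_apply]; norm_num
  have hUtU : U.transpose * U = 1 := mul_eq_one_comm.mp hUUt
  -- computation of the map on the basis
  have hfq1 : (1/m) • Matrix.toEuclideanLin U q₁ = hv₁ := by
    apply e2ext
    · rw [smul_coord, tel_coord, hU00, hU01, hv₁_0]
      rw [div_helper K' _ _ _ _ m hKne (by rw [← hqa, ← hqb]; linear_combination m * hK)]
      rw [one_div, inv_mul_cancel₀ hm.ne']
    · rw [smul_coord, tel_coord, hU10, hU11, hv₁_1]
      rw [div_helper K' _ _ _ _ 0 hKne (by rw [← hqa, ← hqb]; ring)]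
      rw [mul_zero]
  have hfq2 : (1/m) • Matrix.toEuclideanLin U q₂ = hv₂ := by
    apply e2ext
    · rw [smul_coord, tel_coord, hU00, hU01, hv₂_0]
      rw [div_helper K' _ _ _ _ (m/2) hKne (by rw [← hqc, ← hqd]; linear_combination (m/2) * hK)]
      rw [one_div]
      field_simp
    · rw [smul_coord, tel_coord, hU10, hU11, hv₂_1]
      rw [div_helper K' _ _ _ _ (m*s3/2) hKne
        (by rw [← hqc, ← hqd]; linear_combination (m*s3/2) * hK)]
      rw [one_div]
      field_simp
      exact hs3def
  have hcomb : ∀ (A B : ℤ), (1/m) • Matrix.toEuclideanLin U ((A:ℝ) • q₁ + (B:ℝ) • q₂) =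
      (A:ℝ) • hv₁ + (B:ℝ) • hv₂ := by
    intro A B
    rw [map_add, map_smul, map_smul, smul_add, smul_comm ((1:ℝ)/m) ((A:ℝ)),
      smul_comm ((1:ℝ)/m) ((B:ℝ)), hfq1, hfq2]
  have hz : ∀ (A B : ℤ) (x y : E2), (A:ℝ) • x + (B:ℝ) • y = A • x + B • y := by
    intro A B x y; push_cast [Int.cast_smul_eq_zsmul]; rfl
  refine ⟨1/m, U, by positivity, hUtU, ?_⟩
  ext v
  constructor
  · intro hval
    rw [hex_eq] at hval
    obtain ⟨A, B, rfl⟩ := hval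
    refine ⟨(A:ℝ) • q₁ + (B:ℝ) • q₂, (mem_lat hYB).2 ⟨A, B, rfl⟩, ?_⟩
    show (1/m) • Matrix.toEuclideanLin U ((A:ℝ) • q₁ + (B:ℝ) • q₂) = A • hv₁ + B • hv₂
    rw [hcomb, hz]
  · rintro ⟨u, hu, rfl⟩
    obtain ⟨A, B, rfl⟩ := (mem_lat hYB).1 hu
    rw [hex_eq]
    refine ⟨A, B, ?_⟩
    show (1/m) • Matrix.toEuclideanLin U ((A:ℝ) • q₁ + (B:ℝ) • q₂) = A • hv₁ + B • hv₂
    rw [hcomb, hz]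

/-- backward: similar to hexagonal implies angle π/3 -/
lemma angle_of_similar (hB : IsZBasis Λ b₁ b₂) (hsim : LatSimilar Λ hexLattice) :
    latAngle Λ = π/3 := by
  obtain ⟨α, U, hα, hU, him⟩ := hsim
  have hα2 : (0:ℝ) < α^2 := by positivity
  have hinner : ∀ v w, ⟪α • Matrix.toEuclideanLin U v, α • Matrix.toEuclideanLin U w⟫ =
      α^2 * ⟪v,w⟫ := sim_inner hU α
  set f := fun v : E2 => α • Matrix.toEuclideanLin U v with hf
  have hflin : ∀ (s t : ℝ) (x y : E2), f (s • x + t • y) = s • f x + t • f y := by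
    intro s t x y
    simp only [hf, map_add, map_smul, smul_add, smul_comm α s, smul_comm α t]
  have hinj : ∀ x y : E2, f x = f y → x = y := by
    intro x y h
    have h0 : f x - f y = f (x - y) := by
      simp only [hf, map_sub, smul_sub]
    have h1 : ⟪f (x-y), f (x-y)⟫ = 0 := by rw [← h0, h, sub_self, inner_zero_left]
    have h2 : α^2 * ⟪x-y, x-y⟫ = 0 := by rw [← hinner]; exact h1
    have h3 : ⟪x-y, x-y⟫ = (0:ℝ) := by
      rcases mul_eq_zero.1 h2 with h' | h'
      · exact absurd h' hα2.ne'
      · exact h'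
    have := inner_self_eq_zero.1 h3
    rwa [sub_eq_zero] at this
  have hmem1 : hv₁ ∈ hexLattice := by rw [hex_eq]; exact ⟨1, 0, by simp⟩
  have hmem2 : hv₂ ∈ hexLattice := by rw [hex_eq]; exact ⟨0, 1, by simp⟩
  rw [him] at hmem1 hmem2
  obtain ⟨w₁, hw₁Λ, hfw₁⟩ := hmem1
  obtain ⟨w₂, hw₂Λ, hfw₂⟩ := hmem2
  have hfw₁' : α • Matrix.toEuclideanLin U w₁ = hv₁ := hfw₁
  have hfw₂' : α • Matrix.toEuclideanLin U w₂ = hv₂ := hfw₂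
  set r : ℝ := |α|⁻¹ with hrdef
  have hr : 0 < r := by positivity
  have hr2 : r^2 = 1/α^2 := by
    rw [hrdef, inv_pow, sq_abs, one_div]
  have hnw1 : ‖w₁‖^2 = r^2 := by
    have := hinner w₁ w₁
    rw [hfw₁'] at this
    rw [real_inner_self_eq_norm_sq, real_inner_self_eq_norm_sq, nh1] at this
    rw [hr2]
    field_simp at this ⊢
    linarith [this]
  have hnw2 : ‖w₂‖^2 = r^2 := by
    have := hinner w₂ w₂
    rw [hfw₂'] at this
    rw [real_inner_self_eq_norm_sq, real_inner_self_eq_norm_sq, nh2] at this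
    rw [hr2]
    field_simp at this ⊢
    linarith [this]
  have hiw : ⟪w₁, w₂⟫ = r^2/2 := by
    have := hinner w₁ w₂
    rw [hfw₁', hfw₂', ih12] at this
    rw [hr2]
    field_simp at this ⊢
    linarith [this]
  have hcrw : cross w₁ w₂ ≠ 0 := by
    have hcs : cross w₁ w₂ ^ 2 = 3/4*r^4 := by
      rw [cross_sq, hnw1, hnw2, hiw]; ring
    intro h; rw [h] at hcs; nlinarith [pow_pos hr 4]
  have hz : ∀ (A B : ℤ) (x y : E2), (A:ℝ) • x + (B:ℝ) • y = A • x + B • y := by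
    intro A B x y; push_cast [Int.cast_smul_eq_zsmul]; rfl
  have hWB : IsZBasis Λ w₁ w₂ := by
    refine ⟨(cross_ne_iff _ _).2 hcrw, Set.ext fun v => ⟨fun hv => ?_, ?_⟩⟩
    · have hfv : f v ∈ hexLattice := by rw [him]; exact Set.mem_image_of_mem f hv
      rw [hex_eq] at hfv
      obtain ⟨A, B, hAB⟩ := hfv
      have : f v = f ((A:ℝ) • w₁ + (B:ℝ) • w₂) := by
        rw [hflin, hfw₁, hfw₂, hAB, hz]
      exact ⟨A, B, by rw [hinj _ _ this, hz]⟩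
    · rintro ⟨A, B, rfl⟩
      rw [← hz]
      exact lat_combo hB hw₁Λ hw₂Λ A B
  exact latAngle_of_hex_basis hWB hr hnw1 hnw2 hiw

end S16

/-- For a well-rounded full-rank lattice `Λ ⊆ ℝ²`,
`Δ(Λ) = π/(4 sin θ(Λ)) ≤ π/(2√3)`, with equality iff `θ(Λ) = π/3`, and the lattices with
`θ(Λ) = π/3` are precisely those similar to the hexagonal lattice. -/
theorem stmt16 (Λ : Set E2) (hΛ : IsLattice Λ)
    (hWR : succMin Λ 1 = succMin Λ 2) :
    density Λ = π / (4 * Real.sin (latAngle Λ)) ∧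
      density Λ ≤ π / (2 * Real.sqrt 3) ∧
      (density Λ = π / (2 * Real.sqrt 3) ↔ latAngle Λ = π / 3) ∧
      (latAngle Λ = π / 3 ↔ LatSimilar Λ hexLattice) := by
  classical
  have hB : IsZBasis Λ hΛ.choose hΛ.choose_spec.choose := hΛ.choose_spec.choose_spec
  have hdet0 : latDet Λ = detB hΛ.choose hΛ.choose_spec.choose := by
    rw [latDet, dif_pos hΛ]
  have hex : ∃ p : E2 × E2, IsMinPair Λ p.1 p.2 := S16.exists_minpair hB
  have hθ : latAngle Λ = angle hex.choose.1 hex.choose.2 := by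
    rw [latAngle, dif_pos hex]
  set y₁ := hex.choose.1 with hy₁
  set y₂ := hex.choose.2 with hy₂
  have hP : IsMinPair Λ y₁ y₂ := hex.choose_spec
  obtain ⟨hpos, heq, hinn, hinn2, hYB, hdet2⟩ := S16.minpair_facts hB hWR hP
  set θ := angle y₁ y₂ with hθdef
  rw [hθ]
  have hpos2 : 0 < ‖y₂‖ := by rw [heq]; exact hpos
  have hcosθ : Real.cos θ = (@inner ℝ _ _ y₁ y₂) / ‖y₁‖^2 := by
    rw [hθdef, cos_angle, heq, sq]
  obtain ⟨hθ3, hsin32, hsinpos⟩ := S16.angle_bounds (pow_pos hpos 2) hinn hinn2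
    (angle_nonneg y₁ y₂) hP.2.2.2.2.2 hcosθ
  have hθpi2 : θ ≤ π/2 := hP.2.2.2.2.2
  have hm1 : succMin Λ 1 = ‖y₁‖ := hP.2.2.2.1.symm
  have hdv : latDet Λ = ‖y₁‖^2 * Real.sin θ := by
    rw [hdet0, hdet2, S16.detB_val hpos hpos2, heq]; ring
  have hdensity : density Λ = π / (4 * Real.sin θ) := by
    rw [density, hm1, hdv, div_eq_div_iff (by positivity) (by positivity)]
    ring
  have hs3pos := S16.sqrt_three_pos
  refine ⟨hdensity, ?_, ?_, ?_⟩
  · rw [hdensity, div_le_div_iff₀ (by positivity) (by positivity)]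
    nlinarith [Real.pi_pos, hsin32, hs3pos]
  · constructor
    · intro hEq
      rw [hdensity, div_eq_div_iff (by positivity) (by positivity)] at hEq
      have hsin : Real.sin θ = Real.sqrt 3 / 2 := by
        nlinarith [Real.pi_pos, hEq]
      have hstep : (1:ℝ) - (Real.sqrt 3/2)^2 = (1/2)^2 := by
        rw [div_pow, S16.sqrt_three_sq]; norm_num
      have hlo : -(π/2) ≤ θ := by linarith [angle_nonneg y₁ y₂, Real.pi_pos]
      have hhalf : (0:ℝ) ≤ 1/2 := by norm_num
      have hcos : Real.cos θ = 1/2 := by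
        rw [Real.cos_eq_sqrt_one_sub_sin_sq hlo hθpi2, hsin, hstep, Real.sqrt_sq hhalf]
      exact S16.theta_eq_pi_div_three (angle_nonneg y₁ y₂) (angle_le_pi y₁ y₂) hcos
    · intro h3
      rw [hdensity, h3, Real.sin_pi_div_three,
        show (4:ℝ) * (Real.sqrt 3 / 2) = 2 * Real.sqrt 3 by ring]
  · constructor
    · intro h3
      have hinnval : (@inner ℝ _ _ y₁ y₂) = ‖y₁‖^2/2 := by
        have : Real.cos θ = 1/2 := by rw [h3, Real.cos_pi_div_three]
        rw [hcosθ, div_eq_iff (pow_ne_zero 2 hpos.ne')] at this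
        linarith
      exact S16.similar_of_hex_basis hYB hpos rfl (by rw [heq]) hinnval
    · intro hsim
      have := S16.angle_of_similar hB hsim
      rwa [hθ] at this
end
end
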